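/- arXiv:1512.06403 — 4 statements merged into one kernel-verified Lean document; each statement's English description precedes it below -/
import Mathlib

section
/- For every n ≥ 4, the finite symplectic group Sp(2n, 𝔽₂) over the field with two elements is a simple group. -/
open Matrix

namespace SpSimple

variable {n : ℕ}

abbrev K := ZMod 2
abbrev Ix (n : ℕ) := Fin n ⊕ Fin n
abbrev V (n : ℕ) := Ix n → K

/-- The symplectic bilinear form. -/
def B (x y : V n) : K := x ⬝ᵥ (Matrix.J (Fin n) K *ᵥ y)

lemma B_add_left (x x' y : V n) : B (x + x') y = B x y + B x' y := by
  simp [B, add_dotProduct]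

lemma B_add_right (x y y' : V n) : B x (y + y') = B x y + B x y' := by
  simp [B, mulVec_add, dotProduct_add]

lemma B_smul_right (c : K) (x y : V n) : B x (c • y) = c * B x y := by
  simp [B, mulVec_smul, dotProduct_smul, smul_eq_mul]

lemma B_smul_left (c : K) (x y : V n) : B (c • x) y = c * B x y := by
  simp [B, smul_dotProduct, smul_eq_mul]

lemma J_mulVec_apply (y : V n) :
    ∀ i, (Matrix.J (Fin n) K *ᵥ y) i
      = Sum.elim (fun i => y (Sum.inr i)) (fun i => y (Sum.inl i)) i := by
  intro i
  have h2 : ∀ a : K, -a = a := by decide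
  cases i with
  | inl i =>
      simp [Matrix.J, mulVec, dotProduct, Matrix.fromBlocks, Matrix.one_apply, ite_mul,
        Finset.sum_ite_eq, h2]
  | inr i =>
      simp [Matrix.J, mulVec, dotProduct, Matrix.fromBlocks, Matrix.one_apply, ite_mul,
        Finset.sum_ite_eq]

lemma B_apply (x y : V n) :
    B x y = ∑ i : Fin n, (x (Sum.inl i) * y (Sum.inr i) + x (Sum.inr i) * y (Sum.inl i)) := by
  simp [B, dotProduct, Fintype.sum_sum_type, J_mulVec_apply, Finset.sum_add_distrib]

lemma B_comm (x y : V n) : B x y = B y x := by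
  simp only [B_apply]
  congr 1; funext i; ring

lemma B_self (x : V n) : B x x = 0 := by
  have h2 : ∀ a b : K, a * b + b * a = 0 := by decide
  simp [B_apply, h2]

/-- standard basis vector -/
def δ (i : Ix n) : V n := Pi.single i 1

lemma B_delta_inl (i : Fin n) (x : V n) : B (δ (Sum.inl i)) x = x (Sum.inr i) := by
  simp [B_apply, δ, Pi.single_apply, ite_mul, Finset.sum_add_distrib, Finset.sum_ite_eq]

lemma B_delta_inr (i : Fin n) (x : V n) : B (δ (Sum.inr i)) x = x (Sum.inl i) := by
  simp [B_apply, δ, Pi.single_apply, ite_mul, Finset.sum_add_distrib, Finset.sum_ite_eq]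

lemma nondeg {x : V n} (hx : x ≠ 0) : ∃ y : V n, B x y = 1 := by
  have : ∃ i, x i ≠ 0 := by
    by_contra h
    push_neg at h
    exact hx (funext fun i => h i)
  obtain ⟨i, hi⟩ := this
  have hx1 : ∀ a : K, a ≠ 0 → a = 1 := by decide
  cases i with
  | inl i =>
      refine ⟨δ (Sum.inr i), ?_⟩
      rw [B_comm, B_delta_inr]
      exact hx1 _ hi
  | inr i =>
      refine ⟨δ (Sum.inl i), ?_⟩
      rw [B_comm, B_delta_inl]
      exact hx1 _ hi

abbrev G (n : ℕ) := ↥(Matrix.symplecticGroup (Fin n) K)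

def act (g : G n) (x : V n) : V n := (g : Matrix (Ix n) (Ix n) K) *ᵥ x

lemma act_one (x : V n) : act (1 : G n) x = x := by
  simp [act, Matrix.one_mulVec]

lemma act_mul (g h : G n) (x : V n) : act (g * h) x = act g (act h x) := by
  simp [act, Matrix.mulVec_mulVec]

lemma act_act_inv (g : G n) (x : V n) : act g (act g⁻¹ x) = x := by
  rw [← act_mul, mul_inv_cancel, act_one]

lemma act_inv_act (g : G n) (x : V n) : act g⁻¹ (act g x) = x := by
  rw [← act_mul, inv_mul_cancel, act_one]

lemma act_zero (g : G n) : act g (0 : V n) = 0 := by simp [act]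

lemma dot_single_mulVec_single (M : Matrix (Ix n) (Ix n) K) (i j : Ix n) :
    (Pi.single i 1 : V n) ⬝ᵥ (M *ᵥ (Pi.single j 1 : V n)) = M i j := by
  rw [Matrix.mulVec_single, single_dotProduct]
  simp

lemma B_mulVec_mulVec (A : Matrix (Ix n) (Ix n) K) (x y : V n) :
    B (A *ᵥ x) (A *ᵥ y) = x ⬝ᵥ ((Aᵀ * Matrix.J (Fin n) K * A) *ᵥ y) := by
  rw [B, Matrix.mulVec_mulVec, Matrix.dotProduct_mulVec, Matrix.vecMul_mulVec,
    ← Matrix.dotProduct_mulVec, Matrix.mul_assoc]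

/-- The key bridge: membership in the symplectic group is equivalent to preserving `B`. -/
lemma mem_iff_B (A : Matrix (Ix n) (Ix n) K) :
    A ∈ Matrix.symplecticGroup (Fin n) K ↔ ∀ x y : V n, B (A *ᵥ x) (A *ᵥ y) = B x y := by
  rw [SymplecticGroup.mem_iff']
  constructor
  · intro h x y
    rw [B_mulVec_mulVec, h, B]
  · intro h
    ext i j
    have := h (Pi.single i 1) (Pi.single j 1)
    rw [B_mulVec_mulVec] at this
    rw [dot_single_mulVec_single] at this
    rw [this, B, dot_single_mulVec_single]

lemma B_act (g : G n) (x y : V n) : B (act g x) (act g y) = B x y :=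
  (mem_iff_B _).mp g.2 x y

/-- the transvection matrix -/
def TM (v : V n) : Matrix (Ix n) (Ix n) K :=
  1 + Matrix.vecMulVec v (Matrix.J (Fin n) K *ᵥ v)

lemma TM_mulVec (v x : V n) : TM v *ᵥ x = x + B x v • v := by
  funext i
  simp only [TM, Matrix.add_mulVec, Matrix.one_mulVec, Pi.add_apply]
  congr 1
  rw [show Matrix.vecMulVec v (Matrix.J (Fin n) K *ᵥ v) *ᵥ x
      = ((Matrix.J (Fin n) K *ᵥ v) ⬝ᵥ x) • v from ?_]
  · rw [B, dotProduct_comm]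
  · funext j
    simp only [Matrix.vecMulVec_apply, Matrix.mulVec, dotProduct, Pi.smul_apply, smul_eq_mul]
    rw [mul_comm, Finset.mul_sum]
    exact Finset.sum_congr rfl fun k _ => by ring

lemma TM_mem (v : V n) : TM v ∈ Matrix.symplecticGroup (Fin n) K := by
  rw [mem_iff_B]
  intro x y
  rw [TM_mulVec, TM_mulVec]
  simp only [B_add_left, B_add_right, B_smul_left, B_smul_right]
  rw [B_self, B_comm v y]
  generalize B x y = p
  generalize B x v = q
  generalize B y v = r
  revert p q r; decide

/-- the transvection as a group element -/
def TT (v : V n) : G n := ⟨TM v, TM_mem v⟩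

lemma act_TT (v x : V n) : act (TT v) x = x + B x v • v := TM_mulVec v x

lemma ext_act {g h : G n} (H : ∀ x, act g x = act h x) : g = h := by
  apply Subtype.ext
  ext i j
  have := congrFun (H (Pi.single j 1)) i
  simpa [act, Matrix.mulVec_single] using this

lemma TT_zero : (TT (0 : V n)) = 1 := by
  apply ext_act
  intro x
  rw [act_TT, act_one]
  simp

lemma TT_sq (v : V n) : TT v * TT v = 1 := by
  apply ext_act
  intro x
  rw [act_mul, act_TT, act_TT, act_one, B_add_left, B_smul_left, B_self, mul_zero, add_zero]
  generalize B x v = q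
  rw [add_assoc, ← add_smul]
  rw [show q + q = 0 from by revert q; decide]
  simp

lemma TT_inv (v : V n) : (TT v)⁻¹ = TT v :=
  inv_eq_of_mul_eq_one_right (TT_sq v)

lemma conj_TT (g : G n) (v : V n) : g * TT v * g⁻¹ = TT (act g v) := by
  apply ext_act
  intro x
  rw [act_mul, act_mul, act_TT, act_TT]
  have : B (act g⁻¹ x) v = B x (act g v) := by
    conv_rhs => rw [show x = act g (act g⁻¹ x) from (act_act_inv g x).symm]
    rw [B_act]
  rw [this]
  generalize B x (act g v) = c
  show (g : Matrix (Ix n) (Ix n) K) *ᵥ _ = _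
  rw [Matrix.mulVec_add]
  congr 1
  · exact act_act_inv g x
  · show act g (c • v) = c • act g v
    simp [act, Matrix.mulVec_smul]

lemma act_TT_of_B_zero {v x : V n} (h : B x v = 0) : act (TT v) x = x := by
  rw [act_TT, h]; simp

lemma act_ne_zero (g : G n) {x : V n} (hx : x ≠ 0) : act g x ≠ 0 := by
  intro h
  apply hx
  have := congrArg (act g⁻¹) h
  rw [act_inv_act] at this
  rw [this]
  simp [act]


lemma ext_act_single {g h : G n} (H : ∀ i : Ix n, act g (δ i) = act h (δ i)) : g = h := by
  apply Subtype.ext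
  ext i j
  have := congrFun (H j) i
  simpa [act, δ, Matrix.mulVec_single] using this
lemma B_zero_left (y : V n) : B 0 y = 0 := by simp [B]
lemma B_zero_right (x : V n) : B x 0 = 0 := by simp [B]

lemma add_self (x : V n) : x + x = 0 := by
  funext i
  have : ∀ a : K, a + a = 0 := by decide
  exact this (x i)

lemma K_cases (a : K) : a = 0 ∨ a = 1 := by revert a; decide

lemma ne_zero_of_B_one {x y : V n} (h : B x y = 1) : x ≠ 0 ∧ y ≠ 0 := by
  constructor
  · rintro rfl; rw [B_zero_left] at h; exact one_ne_zero h.symm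
  · rintro rfl; rw [B_zero_right] at h; exact one_ne_zero h.symm

lemma eq_of_B_eq {x y : V n}
    (hnd : ∀ z : V n, z ≠ 0 → ∃ w, B z w = 1)
    (h : ∀ c : V n, B x c = B y c) : x = y := by
  by_contra hne
  have hxy : x + y ≠ 0 := by
    intro h0
    apply hne
    have := congrArg (fun z => z + y) h0
    simpa [add_assoc, add_self] using this
  obtain ⟨w, hw⟩ := hnd _ hxy
  rw [B_add_left, h w, show B y w + B y w = 0 from by
      have : ∀ a : K, a + a = 0 := by decide
      exact this _] at hw
  exact one_ne_zero hw.symm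

lemma act_TT_act_TT (w x : V n) : act (TT w) (act (TT w) x) = x := by
  rw [← act_mul, TT_sq, act_one]

/-- coordinate subspaces -/
def Phi (n m : ℕ) : Set (V n) :=
  {x | ∀ j : Fin n, m ≤ (j : ℕ) → x (Sum.inl j) = 0 ∧ x (Sum.inr j) = 0}

lemma Phi_add {m : ℕ} {x y : V n} (hx : x ∈ Phi n m) (hy : y ∈ Phi n m) : x + y ∈ Phi n m := by
  intro j hj
  obtain ⟨h1, h2⟩ := hx j hj
  obtain ⟨h3, h4⟩ := hy j hj
  constructor <;> simp [h1, h2, h3, h4]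

lemma Phi_smul {m : ℕ} (c : K) {x : V n} (hx : x ∈ Phi n m) : c • x ∈ Phi n m := by
  intro j hj
  obtain ⟨h1, h2⟩ := hx j hj
  constructor <;> simp [h1, h2]

lemma Phi_top (x : V n) : x ∈ Phi n n := by
  intro j hj
  have := j.isLt
  exact absurd hj (by omega)

lemma delta_inl_mem_Phi {m : ℕ} {j : Fin n} (hj : (j : ℕ) < m) : δ (Sum.inl j) ∈ Phi n m := by
  intro i hi
  have : i ≠ j := by rintro rfl; omega
  constructor <;> simp [δ, Pi.single_apply, this.symm, Sum.inl.injEq]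

lemma delta_inr_mem_Phi {m : ℕ} {j : Fin n} (hj : (j : ℕ) < m) : δ (Sum.inr j) ∈ Phi n m := by
  intro i hi
  have : i ≠ j := by rintro rfl; omega
  constructor <;> simp [δ, Pi.single_apply, this.symm, Sum.inl.injEq]

/-- relative nondegeneracy -/
lemma nondeg_Phi {m : ℕ} {x : V n} (hx : x ∈ Phi n m) (hx0 : x ≠ 0) :
    ∃ y ∈ Phi n m, B x y = 1 := by
  have : ∃ i, x i ≠ 0 := by
    by_contra h; push_neg at h; exact hx0 (funext fun i => h i)
  obtain ⟨i, hi⟩ := this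
  have hx1 : ∀ a : K, a ≠ 0 → a = 1 := by decide
  cases i with
  | inl i =>
      have him : (i : ℕ) < m := by
        by_contra h
        exact hi (hx i (by omega)).1
      exact ⟨δ (Sum.inr i), delta_inr_mem_Phi him, by rw [B_comm, B_delta_inr]; exact hx1 _ hi⟩
  | inr i =>
      have him : (i : ℕ) < m := by
        by_contra h
        exact hi (hx i (by omega)).2
      exact ⟨δ (Sum.inl i), delta_inl_mem_Phi him, by rw [B_comm, B_delta_inl]; exact hx1 _ hi⟩

/-- joint hyperbolic witness -/
lemma joint_witness {m : ℕ} {x y : V n} (hx : x ∈ Phi n m) (hy : y ∈ Phi n m)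
    (hx0 : x ≠ 0) (hy0 : y ≠ 0) :
    ∃ w ∈ Phi n m, B x w = 1 ∧ B y w = 1 := by
  obtain ⟨a, ha, hxa⟩ := nondeg_Phi hx hx0
  obtain ⟨b, hb, hyb⟩ := nondeg_Phi hy hy0
  rcases K_cases (B y a) with hya | hya
  · rcases K_cases (B x b) with hxb | hxb
    · exact ⟨a + b, Phi_add ha hb, by rw [B_add_right, hxa, hxb]; decide, by rw [B_add_right, hya, hyb]; decide⟩
    · exact ⟨b, hb, hxb, hyb⟩
  · exact ⟨a, ha, hxa, hya⟩

/-- separating functional (ambient) -/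
lemma separating {x y : V n} (hy0 : y ≠ 0) (hxy : x ≠ y) :
    ∃ a : V n, B x a = 0 ∧ B y a = 1 := by
  by_contra h
  push_neg at h
  have key : ∀ c : V n, B x c = B y c := by
    intro c
    rcases K_cases (B x c) with h1 | h1
    · rcases K_cases (B y c) with h2 | h2
      · rw [h1, h2]
      · exact absurd h2 (h c h1)
    · rcases K_cases (B y c) with h2 | h2
      · obtain ⟨b, hyb⟩ := nondeg hy0
        rcases K_cases (B x b) with h3 | h3
        · exact absurd hyb (h b h3)
        · have hba : B x (b + c) = 0 := by rw [B_add_right, h1, h3]; decide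
          have : B y (b + c) = 1 := by rw [B_add_right, hyb, h2]; decide
          exact absurd this (h _ hba)
      · rw [h1, h2]
  exact hxy (eq_of_B_eq (fun z hz => nondeg hz) key)

/-- the subgroup generated by transvections with directions in `Phi n m` -/
def Hsub (n m : ℕ) : Subgroup (G n) := Subgroup.closure (TT '' (Phi n m))

lemma TT_mem_Hsub {m : ℕ} {w : V n} (hw : w ∈ Phi n m) : TT w ∈ Hsub n m :=
  Subgroup.subset_closure ⟨w, hw, rfl⟩

/-- elements of `Hsub n m` preserve `Phi n m` -/
lemma Hsub_maps_Phi {m : ℕ} {h : G n} (hh : h ∈ Hsub n m) :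
    ∀ x, x ∈ Phi n m ↔ act h x ∈ Phi n m := by
  induction hh using Subgroup.closure_induction with
  | mem g hg =>
      obtain ⟨w, hw, rfl⟩ := hg
      intro x
      constructor
      · intro hx
        rw [act_TT]
        exact Phi_add hx (Phi_smul _ hw)
      · intro hx
        have hxx : x = act (TT w) (act (TT w) x) := (act_TT_act_TT w x).symm
        rw [hxx, act_TT w (act (TT w) x)]
        exact Phi_add hx (Phi_smul _ hw)
  | one => intro x; rw [act_one]
  | mul g g' _ _ ih ih' =>
      intro x
      rw [act_mul]
      exact (ih' x).trans (ih (act g' x))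
  | inv g _ ih =>
      intro x
      have hxx : x = act g (act g⁻¹ x) := by rw [← act_mul, mul_inv_cancel, act_one]
      constructor
      · intro hx
        rw [hxx] at hx
        exact (ih _).mpr hx
      · intro hx
        rw [hxx]
        exact (ih _).mp hx

/-- elements of `Hsub n m` fix the basis vectors with index `≥ m` -/
lemma Hsub_fixes {m : ℕ} {h : G n} (hh : h ∈ Hsub n m) :
    ∀ j : Fin n, m ≤ (j : ℕ) →
      act h (δ (Sum.inl j)) = δ (Sum.inl j) ∧ act h (δ (Sum.inr j)) = δ (Sum.inr j) := by
  induction hh using Subgroup.closure_induction with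
  | mem g hg =>
      obtain ⟨w, hw, rfl⟩ := hg
      intro j hj
      obtain ⟨h1, h2⟩ := hw j hj
      constructor
      · rw [act_TT, B_delta_inl, h2]; simp
      · rw [act_TT, B_delta_inr, h1]; simp
  | one => intro j hj; rw [act_one, act_one]; exact ⟨rfl, rfl⟩
  | mul g g' _ _ ih ih' =>
      intro j hj
      rw [act_mul, act_mul, (ih' j hj).1, (ih' j hj).2]
      exact ih j hj
  | inv g _ ih =>
      intro j hj
      constructor
      · conv_lhs => rw [← (ih j hj).1]
        rw [← act_mul, inv_mul_cancel, act_one]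
      · conv_lhs => rw [← (ih j hj).2]
        rw [← act_mul, inv_mul_cancel, act_one]

lemma act_TT_one {v x : V n} (h : B x v = 1) : act (TT v) x = x + v := by
  rw [act_TT, h, one_smul]

lemma act_TT_zero' {v x : V n} (h : B x v = 0) : act (TT v) x = x := by
  rw [act_TT, h, zero_smul, add_zero]

lemma add_add_cancel (x y : V n) : x + (x + y) = y := by
  rw [← add_assoc, add_self, zero_add]

lemma add_add_cancel' (x y : V n) : x + y + y = x := by
  rw [add_assoc, add_self, add_zero]

/-- relative transitivity on nonzero vectors -/
lemma trans_vec {m : ℕ} {u v : V n} (hu : u ∈ Phi n m) (hv : v ∈ Phi n m)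
    (hu0 : u ≠ 0) (hv0 : v ≠ 0) : ∃ h ∈ Hsub n m, act h u = v := by
  by_cases huv : u = v
  · exact ⟨1, one_mem _, by rw [act_one, huv]⟩
  rcases K_cases (B u v) with hB | hB
  · -- B u v = 0, go through a joint witness w
    obtain ⟨w, hw, hw1, hw2⟩ := joint_witness hu hv hu0 hv0
    have s1 : act (TT (u + w)) u = w := by
      rw [act_TT_one (by rw [B_add_right, B_self, hw1]; decide), add_add_cancel]
    have s2 : act (TT (w + v)) w = v := by
      rw [act_TT_one (by rw [B_add_right, B_self, B_comm, hw2]; decide), add_add_cancel]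
    exact ⟨TT (w + v) * TT (u + w), mul_mem (TT_mem_Hsub (Phi_add hw hv))
      (TT_mem_Hsub (Phi_add hu hw)), by rw [act_mul, s1, s2]⟩
  · refine ⟨TT (u + v), TT_mem_Hsub (Phi_add hu hv), ?_⟩
    rw [act_TT_one (by rw [B_add_right, B_self, hB]; decide), add_add_cancel]

/-- relative transitivity on hyperbolic pairs -/
lemma trans_pair {m : ℕ} {u v u' v' : V n} (hu : u ∈ Phi n m) (hv : v ∈ Phi n m)
    (hu' : u' ∈ Phi n m) (hv' : v' ∈ Phi n m)
    (huv : B u v = 1) (huv' : B u' v' = 1) :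
    ∃ h ∈ Hsub n m, act h u = u' ∧ act h v = v' := by
  have hu0 : u ≠ 0 := (ne_zero_of_B_one huv).1
  have hu'0 : u' ≠ 0 := (ne_zero_of_B_one huv').1
  obtain ⟨h₁, hh₁, hact₁⟩ := trans_vec hu hu' hu0 hu'0
  set v₁ := act h₁ v with hv₁def
  have hv₁ : v₁ ∈ Phi n m := (Hsub_maps_Phi hh₁ v).mp hv
  have hBv₁ : B u' v₁ = 1 := by
    rw [← hact₁, hv₁def, B_act, huv]
  suffices hstab : ∃ h₂ ∈ Hsub n m, act h₂ u' = u' ∧ act h₂ v₁ = v' by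
    obtain ⟨h₂, hh₂, hfix, hmove⟩ := hstab
    exact ⟨h₂ * h₁, mul_mem hh₂ hh₁, by rw [act_mul, hact₁, hfix], by rw [act_mul, ← hv₁def, hmove]⟩
  by_cases hvv : v₁ = v'
  · exact ⟨1, one_mem _, by rw [act_one], by rw [act_one, hvv]⟩
  have hBv₁' : B v₁ u' = 1 := by rw [B_comm]; exact hBv₁
  rcases K_cases (B v₁ v') with hB | hB
  · -- B v₁ v' = 0 : go through v'' = v₁ + u'
    have e1 : act (TT u') u' = u' := act_TT_zero' (B_self u')
    have e2 : act (TT (v₁ + u' + v')) u' = u' := act_TT_zero' (by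
      rw [B_add_right, B_add_right, B_self, B_comm u' v₁, hBv₁', huv']; decide)
    have e3 : act (TT u') v₁ = v₁ + u' := act_TT_one hBv₁'
    have e4 : act (TT (v₁ + u' + v')) (v₁ + u') = v' := by
      rw [act_TT_one (by
        rw [B_add_left, B_add_right, B_add_right, B_add_right, B_add_right, B_self, B_self,
          B_comm u' v₁, hBv₁', hB, huv']; decide)]
      rw [add_add_cancel]
    exact ⟨TT (v₁ + u' + v') * TT u', mul_mem
      (TT_mem_Hsub (Phi_add (Phi_add hv₁ hu') hv')) (TT_mem_Hsub hu'),
      by rw [act_mul, e1, e2], by rw [act_mul, e3, e4]⟩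
  · refine ⟨TT (v₁ + v'), TT_mem_Hsub (Phi_add hv₁ hv'), ?_, ?_⟩
    · exact act_TT_zero' (by rw [B_add_right, hBv₁, huv']; decide)
    · rw [act_TT_one (by rw [B_add_right, B_self, hB]; decide), add_add_cancel]

lemma delta_apply_inr_inl (i j : Fin n) : (δ (Sum.inl i) : V n) (Sum.inr j) = 0 := by
  simp [δ, Pi.single_apply]

lemma delta_apply_inl_inr (i j : Fin n) : (δ (Sum.inr i) : V n) (Sum.inl j) = 0 := by
  simp [δ, Pi.single_apply]

lemma delta_apply_inl_inl {i j : Fin n} (h : i ≠ j) : (δ (Sum.inl i) : V n) (Sum.inl j) = 0 := by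
  simp [δ, Pi.single_apply, Ne.symm h]

lemma delta_apply_inr_inr {i j : Fin n} (h : i ≠ j) : (δ (Sum.inr i) : V n) (Sum.inr j) = 0 := by
  simp [δ, Pi.single_apply, Ne.symm h]

lemma delta_apply_same (i : Ix n) : (δ i : V n) i = 1 := by simp [δ]

lemma Phi_mono {m m' : ℕ} (h : m ≤ m') : Phi n m ⊆ Phi n m' := by
  intro x hx j hj
  exact hx j (le_trans h hj)

lemma Hsub_mono {m m' : ℕ} (h : m ≤ m') : Hsub n m ≤ Hsub n m' :=
  Subgroup.closure_mono (Set.image_mono (Phi_mono h))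

/-- Main generation lemma by upward induction. -/
lemma gen_aux : ∀ m : ℕ, ∀ g : G n,
    (∀ j : Fin n, m ≤ (j : ℕ) →
      act g (δ (Sum.inl j)) = δ (Sum.inl j) ∧ act g (δ (Sum.inr j)) = δ (Sum.inr j)) →
    g ∈ Hsub n n := by
  intro m
  induction m with
  | zero =>
      intro g hg
      have : g = 1 := by
        apply ext_act_single
        intro i
        rw [act_one]
        cases i with
        | inl j => exact (hg j (Nat.zero_le _)).1
        | inr j => exact (hg j (Nat.zero_le _)).2
      rw [this]; exact one_mem _
  | succ m ih =>
      intro g hg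
      by_cases hm : m < n
      · set jm : Fin n := ⟨m, hm⟩ with hjm
        set u := act g (δ (Sum.inl jm)) with hu
        set v := act g (δ (Sum.inr jm)) with hv
        have hcoord : ∀ (x : V n) (j : Fin n),
            x (Sum.inl j) = B (δ (Sum.inr j)) x ∧ x (Sum.inr j) = B (δ (Sum.inl j)) x :=
          fun x j => ⟨(B_delta_inr j x).symm, (B_delta_inl j x).symm⟩
        have hfix : ∀ j : Fin n, m + 1 ≤ (j : ℕ) →
            act g (δ (Sum.inl j)) = δ (Sum.inl j) ∧ act g (δ (Sum.inr j)) = δ (Sum.inr j) := hg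
        have hne : ∀ j : Fin n, m + 1 ≤ (j : ℕ) → jm ≠ j := by
          intro j hj heq
          rw [hjm] at heq
          have : (j : ℕ) = m := by rw [← heq]
          omega

        have hu_mem : u ∈ Phi n (m + 1) := by
          intro j hj
          constructor
          · rw [(hcoord u j).1, hu, ← (hfix j hj).2, B_act, B_delta_inr]
            exact delta_apply_inl_inl (hne j hj)
          · rw [(hcoord u j).2, hu, ← (hfix j hj).1, B_act, B_delta_inl, delta_apply_inr_inl]
        have hv_mem : v ∈ Phi n (m + 1) := by
          intro j hj
          constructor
          · rw [(hcoord v j).1, hv, ← (hfix j hj).2, B_act, B_delta_inr, delta_apply_inl_inr]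
          · rw [(hcoord v j).2, hv, ← (hfix j hj).1, B_act, B_delta_inl]
            exact delta_apply_inr_inr (hne j hj)
        have hBuv : B u v = 1 := by
          rw [hu, hv, B_act, B_delta_inl, delta_apply_same]
        have hBdd : B (δ (Sum.inl jm)) (δ (Sum.inr jm)) = (1 : K) := by
          rw [B_delta_inl, delta_apply_same]
        have hjmv : (jm : ℕ) = m := rfl
        obtain ⟨h, hh, hact1, hact2⟩ := trans_pair hu_mem hv_mem
          (delta_inl_mem_Phi (by rw [hjmv]; omega)) (delta_inr_mem_Phi (by rw [hjmv]; omega))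
          hBuv hBdd
        have hhg : h * g ∈ Hsub n n := by
          apply ih
          intro j hj
          rcases Nat.lt_or_ge (j : ℕ) (m + 1) with hj' | hj'
          · have : j = jm := by
              apply Fin.ext
              simp only [hjm]
              omega
            rw [this]
            constructor
            · rw [act_mul, ← hu, hact1]
            · rw [act_mul, ← hv, hact2]
          · constructor
            · rw [act_mul, (hg j hj').1]
              exact (Hsub_fixes hh j hj').1
            · rw [act_mul, (hg j hj').2]
              exact (Hsub_fixes hh j hj').2
        have hhmem : h ∈ Hsub n n := Hsub_mono (by omega) hh
        have : g = h⁻¹ * (h * g) := by group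
        rw [this]
        exact mul_mem (inv_mem hhmem) hhg
      · -- m ≥ n : hypothesis of ih is vacuous for indices ≥ m as well
        apply ih
        intro j hj
        have := j.isLt
        omega

lemma generation (g : G n) : g ∈ Hsub n n :=
  gen_aux (n + 1) g (fun j hj => absurd hj (by have := j.isLt; omega))

section Orbit

variable (N : Subgroup (G n)) [hN : N.Normal]

/-- `rel N u v` : `v` is in the `N`-orbit of `u`. -/
def rel (u v : V n) : Prop := ∃ ν ∈ N, act ν u = v

lemma rel_refl (u : V n) : rel N u u := ⟨1, one_mem _, act_one u⟩

lemma rel_symm {u v : V n} (h : rel N u v) : rel N v u := by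
  obtain ⟨ν, hν, hact⟩ := h
  exact ⟨ν⁻¹, inv_mem hν, by rw [← hact, act_inv_act]⟩

lemma rel_trans {u v w : V n} (h1 : rel N u v) (h2 : rel N v w) : rel N u w := by
  obtain ⟨ν, hν, hact⟩ := h1
  obtain ⟨μ, hμ, hact'⟩ := h2
  exact ⟨μ * ν, mul_mem hμ hν, by rw [act_mul, hact, hact']⟩

lemma rel_equivariant {u v : V n} (g : G n) (h : rel N u v) : rel N (act g u) (act g v) := by
  obtain ⟨ν, hν, hact⟩ := h
  refine ⟨g * ν * g⁻¹, hN.conj_mem ν hν g, ?_⟩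
  rw [act_mul, act_mul, act_inv_act, hact]

/-- If the orbit of `u` contains `v ≠ u` with `B u v = 1`, the orbit contains everything. -/
lemma orbit_all_of_hyperbolic {u v : V n} (huv : rel N u v) (hne : u ≠ v) (hB : B u v = 1) :
    ∀ t : V n, t ≠ 0 → rel N u t := by
  have hu0 : u ≠ 0 := (ne_zero_of_B_one hB).1
  -- step 1 : every w with B u w = 1 is in the orbit of u
  have step1 : ∀ {u' v' : V n}, rel N u' v' → B u' v' = 1 → ∀ w, B u' w = 1 → rel N u' w := by
    intro u' v' h1 h2 w hw
    obtain ⟨g, _, hgu, hgv⟩ := trans_pair (Phi_top u') (Phi_top v') (Phi_top u') (Phi_top w)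
      h2 hw
    have := rel_equivariant N g h1
    rw [hgu, hgv] at this
    exact this
  intro t ht0
  rcases K_cases (B u t) with hBt | hBt
  · by_cases htu : t = u
    · rw [htu]; exact rel_refl N u
    · obtain ⟨w, _, hw1, hw2⟩ := joint_witness (Phi_top u) (Phi_top t) hu0 ht0
      have huw : rel N u w := step1 huv hB w hw1
      have hwu : B w u = 1 := by rw [B_comm]; exact hw1
      have hwt : B w t = 1 := by rw [B_comm]; exact hw2
      have : rel N w t := step1 (rel_symm N huw) hwu t hwt
      exact rel_trans N huw this
  · exact step1 huv hB t hBt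

/-- If `N` moves some vector, then `N` is transitive on nonzero vectors. -/
lemma N_transitive {σ : G n} (hσN : σ ∈ N) {x : V n} (hx : act σ x ≠ x) :
    ∀ u v : V n, u ≠ 0 → v ≠ 0 → rel N u v := by
  have hx0 : x ≠ 0 := by
    intro h
    rw [h, act_zero] at hx
    exact hx rfl
  set w := act σ x with hw
  have hxw : rel N x w := ⟨σ, hσN, rfl⟩
  have hxw_ne : x ≠ w := fun h => hx (by rw [← h])
  have hw0 : w ≠ 0 := act_ne_zero σ hx0
  -- get a hyperbolic pair inside one orbit
  have key : ∃ z : V n, ∀ t : V n, t ≠ 0 → rel N z t := by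
    rcases K_cases (B x w) with hB | hB
    · -- B x w = 0 : use a separating functional
      obtain ⟨a, ha1, ha2⟩ := separating hw0 hxw_ne
      have h1 : act (TT a) x = x := by rw [act_TT, ha1, zero_smul, add_zero]
      have h2 : act (TT a) w = w + a := by rw [act_TT, ha2, one_smul]
      have h3 : rel N x (w + a) := by
        have := rel_equivariant N (TT a) hxw
        rwa [h1, h2] at this
      have h4 : rel N w (w + a) := rel_trans N (rel_symm N hxw) h3
      have h5 : B w (w + a) = 1 := by rw [B_add_right, B_self, ha2, zero_add]
      have h6 : w ≠ w + a := by
        intro h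
        have : a = 0 := by
          have := congrArg (fun z => w + z) h.symm
          simpa [← add_assoc, add_self] using this
        rw [this] at ha2
        rw [show B w (0 : V n) = 0 from by
          have := B_add_right w 0 0
          simpa using this] at ha2
        exact one_ne_zero ha2.symm
      exact ⟨w, orbit_all_of_hyperbolic N h4 h6 h5⟩
    · exact ⟨x, orbit_all_of_hyperbolic N hxw hxw_ne hB⟩
  obtain ⟨z, hz⟩ := key
  intro u v hu hv
  exact rel_trans N (rel_symm N (hz u hu)) (hz v hv)

end Orbit
/-- the 6-transvection relation inside a totally isotropic triple -/
lemma TT_relation {a b c : V n} (hab : B a b = 0) (hac : B a c = 0) (hbc : B b c = 0) :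
    TT a * TT b * TT c * TT (a + b) * TT (b + c) * TT (a + c) = TT (a + b + c) := by
  have hba : B b a = 0 := by rw [B_comm]; exact hab
  have hca : B c a = 0 := by rw [B_comm]; exact hac
  have hcb : B c b = 0 := by rw [B_comm]; exact hbc
  apply ext_act
  intro x
  simp only [act_mul, act_TT, B_add_left, B_add_right, B_smul_left, B_self,
    hab, hac, hbc, hba, hca, hcb, mul_zero, zero_mul, add_zero, zero_add, mul_one, one_mul]
  funext i
  simp only [Pi.add_apply, Pi.smul_apply, smul_eq_mul]
  generalize B x a = p
  generalize B x b = q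
  generalize B x c = r
  generalize a i = ai
  generalize b i = bi
  generalize c i = ci
  generalize x i = xi
  revert p q r ai bi ci xi
  decide

lemma delta_ne_zero (i : Ix n) : (δ i : V n) ≠ 0 := by
  intro h
  have := congrFun h i
  rw [delta_apply_same] at this
  exact one_ne_zero this

lemma TT_mem_closure (v : V n) : TT v ∈ Hsub n n :=
  Subgroup.subset_closure ⟨v, Phi_top v, rfl⟩

theorem main (hn : 3 ≤ n) (N : Subgroup (G n)) (hNormal : N.Normal) : N = ⊥ ∨ N = ⊤ := by
  haveI := hNormal
  by_cases hbot : N = ⊥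
  · exact Or.inl hbot
  right
  obtain ⟨σ, hσN, hσ1⟩ := (N.bot_or_exists_ne_one).resolve_left hbot
  have hx : ∃ x : V n, act σ x ≠ x := by
    by_contra h
    push_neg at h
    exact hσ1 (ext_act (fun x => (h x).trans (act_one x).symm))
  obtain ⟨x, hx⟩ := hx
  have htrans := N_transitive N hσN hx
  -- the base transvection
  have h0n : 0 < n := by omega
  set i₀ : Fin n := ⟨0, h0n⟩
  set x₀ : V n := δ (Sum.inl i₀) with hx₀
  set T₀ : G n := TT x₀ with hT₀
  have hx₀0 : x₀ ≠ 0 := delta_ne_zero _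
  have key1 : ∀ v : V n, v ≠ 0 → ∃ ν ∈ N, TT v = ν * T₀ * ν⁻¹ := by
    intro v hv
    obtain ⟨ν, hνN, hact⟩ := htrans x₀ v hx₀0 hv
    exact ⟨ν, hνN, by rw [conj_TT, hact]⟩
  by_cases hT₀N : T₀ ∈ N
  · -- all transvections are in N, hence N = ⊤
    rw [eq_top_iff]
    intro g _
    have : Hsub n n ≤ N := by
      rw [Hsub, Subgroup.closure_le]
      rintro _ ⟨v, -, rfl⟩
      by_cases hv : v = 0
      · rw [hv, TT_zero]; exact one_mem _
      · obtain ⟨ν, hνN, hEq⟩ := key1 v hv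
        rw [hEq]
        exact mul_mem (mul_mem hνN hT₀N) (inv_mem hνN)
    exact this (generation g)
  · -- T₀ ∉ N : derive a contradiction using the 6-transvection relation
    exfalso
    have key2 : ∀ v : V n, v ≠ 0 → TT v * T₀ ∈ N := by
      intro v hv
      obtain ⟨ν, hνN, hEq⟩ := key1 v hv
      rw [hEq]
      have : ν * T₀ * ν⁻¹ * T₀ = ν * (T₀ * ν⁻¹ * T₀⁻¹) := by
        rw [TT_inv, ← hT₀]
        group
      rw [this]
      exact mul_mem hνN (hNormal.conj_mem _ (inv_mem hνN) T₀)
    -- quotient map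
    set mk : G n →* (G n ⧸ N) := QuotientGroup.mk' N with hmk
    have hmkT : ∀ v : V n, v ≠ 0 → mk (TT v) = mk T₀ := by
      intro v hv
      have h1 : mk (TT v * T₀) = 1 := (QuotientGroup.eq_one_iff _).mpr (key2 v hv)
      rw [_root_.map_mul] at h1
      have h2 : mk T₀ * mk T₀ = 1 := by
        rw [← _root_.map_mul, hT₀, TT_sq, _root_.map_one]
      calc mk (TT v) = mk (TT v) * (mk T₀ * mk T₀) := by rw [h2, mul_one]
        _ = (mk (TT v) * mk T₀) * mk T₀ := by rw [mul_assoc]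
        _ = mk T₀ := by rw [h1, one_mul]
    -- the isotropic triple
    set i₁ : Fin n := ⟨1, by omega⟩
    set i₂ : Fin n := ⟨2, by omega⟩
    have horth : ∀ i j : Fin n, B (δ (Sum.inl i) : V n) (δ (Sum.inl j)) = 0 := by
      intro i j
      rw [B_delta_inl, delta_apply_inr_inl]
    have hrel := TT_relation (a := (δ (Sum.inl i₀) : V n)) (b := δ (Sum.inl i₁))
      (c := δ (Sum.inl i₂)) (horth _ _) (horth _ _) (horth _ _)
    have hne01 : i₀ ≠ i₁ := by intro h; simpa [i₀, i₁, Fin.ext_iff] using h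
    have hne02 : i₀ ≠ i₂ := by intro h; simpa [i₀, i₂, Fin.ext_iff] using h
    have hne12 : i₁ ≠ i₂ := by intro h; simpa [i₁, i₂, Fin.ext_iff] using h
    have hsum_ne : ∀ (z : V n) (i : Ix n), z i = 1 → z ≠ 0 := by
      intro z i hz h
      rw [h] at hz
      simp at hz
    have hab : (δ (Sum.inl i₀) + δ (Sum.inl i₁) : V n) ≠ 0 := hsum_ne _ (Sum.inl i₁) (by
      simp only [Pi.add_apply]
      rw [delta_apply_inl_inl hne01, delta_apply_same, zero_add])
    have hbc : (δ (Sum.inl i₁) + δ (Sum.inl i₂) : V n) ≠ 0 := hsum_ne _ (Sum.inl i₂) (by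
      simp only [Pi.add_apply]
      rw [delta_apply_inl_inl hne12, delta_apply_same, zero_add])
    have hac : (δ (Sum.inl i₀) + δ (Sum.inl i₂) : V n) ≠ 0 := hsum_ne _ (Sum.inl i₂) (by
      simp only [Pi.add_apply]
      rw [delta_apply_inl_inl hne02, delta_apply_same, zero_add])
    have habc : (δ (Sum.inl i₀) + δ (Sum.inl i₁) + δ (Sum.inl i₂) : V n) ≠ 0 :=
      hsum_ne _ (Sum.inl i₂) (by
        simp only [Pi.add_apply]
        rw [delta_apply_inl_inl hne02, delta_apply_inl_inl hne12, delta_apply_same]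
        decide)
    have hmkrel := congrArg mk hrel
    rw [_root_.map_mul, _root_.map_mul, _root_.map_mul, _root_.map_mul, _root_.map_mul]
      at hmkrel
    rw [hmkT (δ (Sum.inl i₀)) (delta_ne_zero _), hmkT (δ (Sum.inl i₁)) (delta_ne_zero _),
      hmkT (δ (Sum.inl i₂)) (delta_ne_zero _),
      hmkT _ hab, hmkT _ hbc, hmkT _ hac, hmkT _ habc] at hmkrel
    have h2 : mk T₀ * mk T₀ = 1 := by rw [← _root_.map_mul, hT₀, TT_sq, _root_.map_one]
    have : (1 : G n ⧸ N) = mk T₀ := by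
      calc (1 : G n ⧸ N) = ((mk T₀ * mk T₀) * (mk T₀ * mk T₀)) * (mk T₀ * mk T₀) := by
            rw [h2]; simp
        _ = mk T₀ * mk T₀ * mk T₀ * mk T₀ * mk T₀ * mk T₀ := by group
        _ = mk T₀ := hmkrel
    exact hT₀N ((QuotientGroup.eq_one_iff _).mp this.symm)


lemma TT_delta_ne_one (h0n : 0 < n) : TT (δ (Sum.inl (⟨0, h0n⟩ : Fin n))) ≠ (1 : G n) := by
  intro h
  have h1 : act (TT (δ (Sum.inl (⟨0, h0n⟩ : Fin n)))) (δ (Sum.inr (⟨0, h0n⟩ : Fin n)))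
      = δ (Sum.inr (⟨0, h0n⟩ : Fin n)) + δ (Sum.inl (⟨0, h0n⟩ : Fin n)) := by
    rw [act_TT, B_delta_inr, delta_apply_same, one_smul]
  rw [h, act_one] at h1
  have : (δ (Sum.inl (⟨0, h0n⟩ : Fin n)) : V n) = 0 := by
    have := congrArg (fun z => δ (Sum.inr (⟨0, h0n⟩ : Fin n)) + z) h1
    simpa [← add_assoc, add_self] using this.symm
  exact delta_ne_zero _ this

end SpSimple

/-- For every `n ≥ 4`, the symplectic group `Sp(2n, 𝔽₂)` is simple. -/
theorem symplecticGroup_zmod_two_isSimpleGroup (n : ℕ) (hn : 4 ≤ n) :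
    IsSimpleGroup (Matrix.symplecticGroup (Fin n) (ZMod 2)) := by
  have h0 : 0 < n := by omega
  exact
    { exists_pair_ne := ⟨SpSimple.TT (SpSimple.δ (Sum.inl (⟨0, h0⟩ : Fin n))), 1,
        SpSimple.TT_delta_ne_one h0⟩,
      eq_bot_or_eq_top_of_normal := fun N hN => SpSimple.main (by omega) N hN }
end

section
/- For every field F of characteristic different from 2 and every n ≥ 1, the center of the symplectic group Sp(2n, F) consists precisely of the two scalar matrices I and −I. -/
open Matrix

lemma stdBasis_transpose {F : Type*} [Field F] {n : ℕ} (i j : Fin n) :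
    (Matrix.single i j (1:F))ᵀ = Matrix.single j i 1 := by
  ext a b
  simp [Matrix.single, and_comm]

lemma comm_symm_scalar {F : Type*} [Field F] {n : ℕ} (hn : 0 < n)
    (P : Matrix (Fin n) (Fin n) F)
    (h : ∀ B : Matrix (Fin n) (Fin n) F, Bᵀ = B → P * B = B * P) :
    P = P ⟨0, hn⟩ ⟨0, hn⟩ • 1 := by
  set z : Fin n := ⟨0, hn⟩
  have offdiag : ∀ i j, i ≠ j → P i j = 0 := by
    intro i j hij
    have hB : (Matrix.single j j (1:F))ᵀ = Matrix.single j j 1 := stdBasis_transpose j j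
    have h0 := congrFun (congrFun (h _ hB) i) j
    rw [Matrix.mul_single_apply_same, Matrix.single_mul_apply_of_ne 1 j j i j hij] at h0
    simpa using h0
  have diag : ∀ i, P i i = P z z := by
    intro i
    by_cases hi : i = z
    · rw [hi]
    · have hB : (Matrix.single i z (1:F) + Matrix.single z i 1)ᵀ
          = Matrix.single i z 1 + Matrix.single z i 1 := by
        rw [transpose_add, stdBasis_transpose, stdBasis_transpose, add_comm]
      have h0 := congrFun (congrFun (h _ hB) i) z
      rw [Matrix.mul_add, Matrix.add_mul] at h0
      have e1 : (P * Matrix.single i z (1:F)) i z = P i i := by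
        rw [Matrix.mul_single_apply_same]; ring
      have e2 : (P * Matrix.single z i (1:F)) i z = 0 :=
        Matrix.mul_single_apply_of_ne 1 z i i z (Ne.symm hi) P
      have e3 : (Matrix.single i z (1:F) * P) i z = P z z := by
        rw [Matrix.single_mul_apply_same]; ring
      have e4 : (Matrix.single z i (1:F) * P) i z = 0 :=
        Matrix.single_mul_apply_of_ne 1 z i i z hi P
      rw [Matrix.add_apply, Matrix.add_apply, e1, e2, e3, e4] at h0
      simpa using h0
  ext i j
  by_cases hij : i = j
  · subst hij; simp [diag i, Matrix.one_apply]
  · simp [offdiag i j hij, Matrix.one_apply, hij]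

lemma upper_mem {F : Type*} [Field F] {n : ℕ} (S : Matrix (Fin n) (Fin n) F)
    (hS : Sᵀ = S) : fromBlocks 1 S 0 1 ∈ Matrix.symplecticGroup (Fin n) F := by
  rw [SymplecticGroup.mem_iff, Matrix.J, fromBlocks_transpose, fromBlocks_multiply,
    fromBlocks_multiply]
  simp [hS]

/-- For every field `F` with `char F ≠ 2` and every `n ≥ 1`, the center of the
symplectic group `Sp(2n, F)` consists precisely of the two matrices `I` and `-I`. -/
theorem symplecticGroup_center_eq (F : Type*) [Field F] (hF : ringChar F ≠ 2)
    (n : ℕ) (hn : 1 ≤ n) :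
    (Subgroup.center (Matrix.symplecticGroup (Fin n) F) : Set (Matrix.symplecticGroup (Fin n) F)) =
      {1, ⟨-1, SymplecticGroup.neg_mem (Submonoid.one_mem _)⟩} := by
  have hn' : 0 < n := hn
  set z : Fin n := ⟨0, hn'⟩
  ext m
  simp only [SetLike.mem_coe, Set.mem_insert_iff, Set.mem_singleton_iff]
  constructor
  · intro hm
    have hcomm := Subgroup.mem_center_iff.mp hm
    set M := (m : Matrix (Fin n ⊕ Fin n) (Fin n ⊕ Fin n) F) with hMdef
    have hMblocks : M = fromBlocks M.toBlocks₁₁ M.toBlocks₁₂ M.toBlocks₂₁ M.toBlocks₂₂ :=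
      (fromBlocks_toBlocks M).symm
    set A := M.toBlocks₁₁
    set B := M.toBlocks₁₂
    set C := M.toBlocks₂₁
    set D := M.toBlocks₂₂
    -- commutation with J
    have hJ : Matrix.J (Fin n) F * M = M * Matrix.J (Fin n) F := by
      have := hcomm ⟨Matrix.J (Fin n) F, SymplecticGroup.J_mem (Fin n) F⟩
      exact congrArg Subtype.val this
    rw [hMblocks, Matrix.J, fromBlocks_multiply, fromBlocks_multiply] at hJ
    simp only [Matrix.zero_mul, Matrix.one_mul, Matrix.mul_zero, Matrix.mul_one,
      Matrix.neg_mul, Matrix.mul_neg, zero_add, add_zero] at hJ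
    obtain ⟨h1, h2, h3, h4⟩ := fromBlocks_inj.mp hJ
    -- h3 : A = D, h4 : B = -C
    -- commutation with upper triangular matrices
    have hU : ∀ S : Matrix (Fin n) (Fin n) F, Sᵀ = S →
        fromBlocks 1 S 0 1 * M = M * fromBlocks 1 S 0 1 := by
      intro S hS
      exact congrArg Subtype.val (hcomm ⟨_, upper_mem S hS⟩)
    have key : ∀ S : Matrix (Fin n) (Fin n) F, Sᵀ = S →
        (A + S * C = A ∧ B + S * D = A * S + B) := by
      intro S hS
      have := hU S hS
      rw [hMblocks, fromBlocks_multiply, fromBlocks_multiply] at this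
      simp only [Matrix.zero_mul, Matrix.one_mul, Matrix.mul_zero, Matrix.mul_one,
        zero_add, add_zero] at this
      obtain ⟨e1, e2, e3, e4⟩ := fromBlocks_inj.mp this
      exact ⟨e1, e2⟩
    have hC : C = 0 := by
      have h := (key 1 (by simp)).1
      rwa [one_mul, add_eq_left] at h
    have hB0 : B = 0 := by rw [h4, hC, neg_zero]
    have hAcomm : ∀ S : Matrix (Fin n) (Fin n) F, Sᵀ = S → A * S = S * A := by
      intro S hS
      have h := (key S hS).2
      rw [← h3, hB0] at h
      simpa using h.symm
    have hscal : A = A z z • 1 := comm_symm_scalar hn' A hAcomm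
    set c : F := A z z
    have hMfinal : M = c • 1 := by
      rw [hMblocks, hB0, hC, ← h3, hscal, ← fromBlocks_one, fromBlocks_smul]
      simp
    -- use symplectic condition to get c * c = 1
    have hmem := m.2
    rw [SymplecticGroup.mem_iff, ← hMdef, hMfinal] at hmem
    have hc2 : c * c = 1 := by
      have h0 := congrFun (congrFun hmem (Sum.inl z)) (Sum.inr z)
      simpa [Matrix.J, fromBlocks, Matrix.one_apply, mul_assoc] using h0
    rcases mul_self_eq_one_iff.mp hc2 with hc | hc
    · left
      apply Subtype.ext
      rw [← hMdef, hMfinal, hc, one_smul]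
      rfl
    · right
      apply Subtype.ext
      rw [← hMdef, hMfinal, hc]
      show (-1 : F) • (1 : Matrix (Fin n ⊕ Fin n) (Fin n ⊕ Fin n) F) = -1
      simp
  · rintro (rfl | rfl)
    · exact Subgroup.one_mem _
    · refine Subgroup.mem_center_iff.mpr fun g => Subtype.ext ?_
      show (g : Matrix (Fin n ⊕ Fin n) (Fin n ⊕ Fin n) F) * (-1) = (-1) * g
      simp
end

section
/- Every nontrivial finite group H embeds into a finite superperfect group so as to form a nontrivial tight pair: there exist n ≥ 4 and an injective group homomorphism φ : H → Sp(2n, 𝔽₂) whose image is a proper subgroup, such that the only normal subgroup of Sp(2n, 𝔽₂) containing φ(H) is the whole group Sp(2n, 𝔽₂). -/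
namespace TightSp
open Matrix

variable {n : ℕ}

abbrev F2 := ZMod 2
abbrev Vn (n : ℕ) := (Fin n ⊕ Fin n) → F2

/-- the symplectic bilinear form -/
def Bf (x y : Vn n) : F2 := x ⬝ᵥ ((Matrix.J (Fin n) F2) *ᵥ y)

/-- rank-one piece of a symplectic transvection -/
def Am (v : Vn n) : Matrix (Fin n ⊕ Fin n) (Fin n ⊕ Fin n) F2 :=
  vecMulVec v ((Matrix.J (Fin n) F2) *ᵥ v)

/-- symplectic transvection matrix -/
def Tm (v : Vn n) : Matrix (Fin n ⊕ Fin n) (Fin n ⊕ Fin n) F2 := 1 + Am v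

lemma F2_neg (u : F2) : -u = u := by revert u; decide
lemma F2_cases (u : F2) : u = 0 ∨ u = 1 := by revert u; decide

lemma F2_ne_zero {u : F2} (h : u ≠ 0) : u = 1 := by revert h u; decide

lemma F2_add_self (u : F2) : u + u = 0 := by revert u; decide

-- vecMulVec small API
lemma vecMulVec_mulVec' (a : Vn n) (b : Vn n) (x : Vn n) :
    vecMulVec a b *ᵥ x = (b ⬝ᵥ x) • a := by
  funext i
  simp only [Matrix.mulVec, vecMulVec_apply, dotProduct, Pi.smul_apply, smul_eq_mul,
    Matrix.smul_apply, Fintype.sum_sum_type]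
  simp only [mul_add, add_mul, Finset.mul_sum, Finset.sum_mul]
  congr 1 <;> (apply Finset.sum_congr rfl; intros; ring)

lemma mul_vecMulVec (M : Matrix (Fin n ⊕ Fin n) (Fin n ⊕ Fin n) F2) (a b : Vn n) :
    M * vecMulVec a b = vecMulVec (M *ᵥ a) b := by
  ext i j
  simp only [Matrix.mul_apply, vecMulVec_apply, Matrix.mulVec, Matrix.vecMul, dotProduct,
    Pi.smul_apply, smul_eq_mul, Matrix.smul_apply, Fintype.sum_sum_type]
  simp only [mul_add, add_mul, Finset.mul_sum, Finset.sum_mul]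
  congr 1 <;> (apply Finset.sum_congr rfl; intros; ring)

lemma vecMulVec_mul (a b : Vn n) (M : Matrix (Fin n ⊕ Fin n) (Fin n ⊕ Fin n) F2) :
    vecMulVec a b * M = vecMulVec a (b ᵥ* M) := by
  ext i j
  simp only [Matrix.mul_apply, vecMulVec_apply, Matrix.mulVec, Matrix.vecMul, dotProduct,
    Pi.smul_apply, smul_eq_mul, Matrix.smul_apply, Fintype.sum_sum_type]
  simp only [mul_add, add_mul, Finset.mul_sum, Finset.sum_mul]
  congr 1 <;> (apply Finset.sum_congr rfl; intros; ring)

lemma vecMulVec_mul_vecMulVec (a b c d : Vn n) :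
    vecMulVec a b * vecMulVec c d = (b ⬝ᵥ c) • vecMulVec a d := by
  ext i j
  simp only [Matrix.mul_apply, vecMulVec_apply, Matrix.mulVec, Matrix.vecMul, dotProduct,
    Pi.smul_apply, smul_eq_mul, Matrix.smul_apply, Fintype.sum_sum_type]
  simp only [mul_add, add_mul, Finset.mul_sum, Finset.sum_mul]
  congr 1 <;> (apply Finset.sum_congr rfl; intros; ring)

lemma vecMulVec_transpose' (a b : Vn n) : (vecMulVec a b)ᵀ = vecMulVec b a := by
  ext i j; simp [vecMulVec_apply, mul_comm]


lemma Mat_add_self (M : Matrix (Fin n ⊕ Fin n) (Fin n ⊕ Fin n) F2) : M + M = 0 := by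
  ext i j; exact F2_add_self _

lemma neg_vec (y : Vn n) : -y = y := by funext i; exact F2_neg _

lemma J_mulVec (y : Vn n) :
    (Matrix.J (Fin n) F2) *ᵥ y
      = Sum.elim (fun i => y (Sum.inr i)) (fun i => y (Sum.inl i)) := by
  have hy : y = Sum.elim (fun i => y (Sum.inl i)) (fun i => y (Sum.inr i)) := by
    funext i; cases i <;> rfl
  rw [Matrix.J, hy, Matrix.fromBlocks_mulVec]
  simp only [Matrix.zero_mulVec, Matrix.one_mulVec, Matrix.neg_mulVec, zero_add, add_zero]
  funext i
  cases i <;> simp [Pi.neg_apply, F2_neg]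

lemma Bf_apply (x y : Vn n) :
    Bf x y = (∑ i, x (Sum.inl i) * y (Sum.inr i)) + ∑ i, x (Sum.inr i) * y (Sum.inl i) := by
  rw [Bf, J_mulVec, dotProduct]
  rw [Fintype.sum_sum_type]
  rfl

lemma Bf_comm (x y : Vn n) : Bf x y = Bf y x := by
  rw [Bf_apply, Bf_apply, add_comm]
  congr 1 <;> (apply Finset.sum_congr rfl; intros; ring)

lemma Bf_self (x : Vn n) : Bf x x = 0 := by
  rw [Bf_apply]
  have : ∑ i, x (Sum.inr i) * x (Sum.inl i) = ∑ i, x (Sum.inl i) * x (Sum.inr i) := by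
    apply Finset.sum_congr rfl; intros; ring
  rw [this, F2_add_self]

lemma Bf_add_left (x y z : Vn n) : Bf (x + y) z = Bf x z + Bf y z := by
  simp [Bf, add_dotProduct]

lemma Bf_add_right (x y z : Vn n) : Bf x (y + z) = Bf x y + Bf x z := by
  simp [Bf, Matrix.mulVec_add, dotProduct_add]

def eb (i : Fin n) : Vn n := Pi.single (Sum.inl i) 1
def fb (i : Fin n) : Vn n := Pi.single (Sum.inr i) 1

lemma Bf_eb (x : Vn n) (j : Fin n) : Bf x (eb j) = x (Sum.inr j) := by
  rw [Bf_apply]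
  simp [eb, Pi.single_apply]

lemma Bf_fb (x : Vn n) (j : Fin n) : Bf x (fb j) = x (Sum.inl j) := by
  rw [Bf_apply]
  simp [fb, Pi.single_apply]

lemma eb_ne_zero (i : Fin n) : eb i ≠ 0 := by
  intro h
  have := congrFun h (Sum.inl i)
  simp [eb] at this

lemma fb_ne_zero (i : Fin n) : fb i ≠ 0 := by
  intro h
  have := congrFun h (Sum.inr i)
  simp [fb] at this

lemma Tm_mulVec (v x : Vn n) : Tm v *ᵥ x = x + Bf x v • v := by
  rw [Tm, Am, Matrix.add_mulVec, Matrix.one_mulVec, vecMulVec_mulVec']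
  congr 1
  rw [dotProduct_comm]
  rfl

lemma Tm_zero : Tm (0 : Vn n) = 1 := by
  simp [Tm, Am, vecMulVec, Matrix.mulVec_zero]
  ext i j
  simp [vecMulVec_apply]

lemma vecMul_J (v : Vn n) : v ᵥ* (Matrix.J (Fin n) F2) = (Matrix.J (Fin n) F2) *ᵥ v := by
  conv_lhs => rw [← Matrix.mulVec_transpose]
  rw [Matrix.J_transpose, Matrix.neg_mulVec, neg_vec]

lemma Tm_mem (v : Vn n) : Tm v ∈ Matrix.symplecticGroup (Fin n) F2 := by
  rw [SymplecticGroup.mem_iff']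
  set J' := Matrix.J (Fin n) F2
  set u := J' *ᵥ v with hu
  have h1 : (Tm v)ᵀ = 1 + vecMulVec u v := by
    rw [Tm, Am, Matrix.transpose_add, Matrix.transpose_one, vecMulVec_transpose']
  rw [h1, Tm, Am]
  have expand : (1 + vecMulVec u v) * J' * (1 + vecMulVec v u)
      = J' + vecMulVec u v * J' + J' * vecMulVec v u
        + vecMulVec u v * J' * vecMulVec v u := by noncomm_ring
  rw [expand, vecMulVec_mul, vecMul_J, ← hu, mul_vecMulVec, ← hu, vecMulVec_mul_vecMulVec]
  have huv : u ⬝ᵥ v = 0 := by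
    rw [dotProduct_comm]
    exact Bf_self v
  rw [huv, zero_smul, add_zero, add_assoc, Mat_add_self, add_zero]

lemma Tm_mul_self (v : Vn n) : Tm v * Tm v = 1 := by
  rw [Tm, Am]
  set u := (Matrix.J (Fin n) F2) *ᵥ v with hu
  rw [add_mul, one_mul, mul_add, mul_one, vecMulVec_mul_vecMulVec]
  have huv : u ⬝ᵥ v = 0 := by rw [dotProduct_comm]; exact Bf_self v
  rw [huv, zero_smul, add_zero, add_assoc, Mat_add_self, add_zero]

lemma mul_Tm {M : Matrix (Fin n ⊕ Fin n) (Fin n ⊕ Fin n) F2}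
    (hM : M ∈ Matrix.symplecticGroup (Fin n) F2) (v : Vn n) :
    M * Tm v = Tm (M *ᵥ v) * M := by
  have hM' := (SymplecticGroup.mem_iff').mp hM
  simp only [Tm, Am]
  rw [mul_add, mul_one, add_mul, one_mul]
  congr 1
  rw [mul_vecMulVec, vecMulVec_mul]
  congr 1
  rw [← Matrix.mulVec_transpose, Matrix.mulVec_mulVec, Matrix.mulVec_mulVec, hM']

lemma Bf_mulVec {M : Matrix (Fin n ⊕ Fin n) (Fin n ⊕ Fin n) F2}
    (hM : M ∈ Matrix.symplecticGroup (Fin n) F2) (x y : Vn n) :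
    Bf (M *ᵥ x) (M *ᵥ y) = Bf x y := by
  have hM' := (SymplecticGroup.mem_iff').mp hM
  rw [Bf, Bf, dotProduct_comm, Matrix.dotProduct_mulVec, ← Matrix.mulVec_transpose,
    Matrix.mulVec_mulVec, Matrix.mulVec_mulVec, hM', dotProduct_comm]


abbrev Gp (n : ℕ) := Matrix.symplecticGroup (Fin n) F2

def tg (v : Vn n) : Gp n := ⟨Tm v, Tm_mem v⟩

@[simp] lemma tg_coe (v : Vn n) : (tg v).1 = Tm v := rfl
@[simp] lemma coe_mul' (g h : Gp n) : (g * h : Gp n).1 = (g).1 * h := rfl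
@[simp] lemma coe_one' : (1 : Gp n).1 = 1 := rfl

lemma tg_sq (v : Vn n) : tg v * tg v = 1 := Subtype.ext (Tm_mul_self v)
lemma tg_inv (v : Vn n) : (tg v)⁻¹ = tg v := inv_eq_of_mul_eq_one_right (tg_sq v)

lemma coe_inv_mul (g : Gp n) : (g⁻¹ : Gp n).1 * g = 1 := by
  have := inv_mul_cancel g
  exact congrArg Subtype.val this

lemma coe_mul_inv (g : Gp n) : (g).1 * (g⁻¹ : Gp n).1 = 1 := by
  have := mul_inv_cancel g
  exact congrArg Subtype.val this

lemma inv_mulVec (g : Gp n) (x : Vn n) :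
    (g⁻¹ : Gp n).1 *ᵥ ((g).1 *ᵥ x) = x := by
  rw [Matrix.mulVec_mulVec, coe_inv_mul, Matrix.one_mulVec]

lemma mulVec_ne_zero (g : Gp n) {x : Vn n} (hx : x ≠ 0) : (g).1 *ᵥ x ≠ 0 := by
  intro h
  apply hx
  have h2 : (g⁻¹ : Gp n).1 *ᵥ ((g).1 *ᵥ x) = (g⁻¹ : Gp n).1 *ᵥ 0 := by rw [h]
  rw [inv_mulVec, Matrix.mulVec_zero] at h2
  exact h2

lemma conj_tg (g : Gp n) (v : Vn n) : g * tg v * g⁻¹ = tg ((g).1 *ᵥ v) := by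
  apply Subtype.ext
  show (g).1 * Tm v * (g⁻¹ : Gp n) = Tm ((g).1 *ᵥ v)
  rw [mul_Tm g.2, Matrix.mul_assoc, coe_mul_inv, mul_one]

def Wgp (n : ℕ) : Subgroup (Gp n) := Subgroup.closure (Set.range (tg (n := n)))

lemma tg_mem_W (v : Vn n) : tg v ∈ Wgp n := Subgroup.subset_closure ⟨v, rfl⟩

def Supp (k : ℕ) (x : Vn n) : Prop :=
  ∀ i : Fin n, (i : ℕ) < k → x (Sum.inl i) = 0 ∧ x (Sum.inr i) = 0

lemma Supp_zero (k : ℕ) : Supp k (0 : Vn n) := fun _ _ => ⟨rfl, rfl⟩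

lemma Supp_add {k : ℕ} {x y : Vn n} (hx : Supp k x) (hy : Supp k y) : Supp k (x + y) := by
  intro i hi
  have h1 := hx i hi; have h2 := hy i hi
  constructor <;> simp [Pi.add_apply, h1.1, h1.2, h2.1, h2.2]

lemma vec_add_self (x : Vn n) : x + x = 0 := by funext i; exact F2_add_self _

lemma add_add_cancel (x y : Vn n) : x + (x + y) = y := by
  rw [← add_assoc, vec_add_self, zero_add]

lemma Supp_zero_all (x : Vn n) : Supp 0 x := fun _ hi => absurd hi (Nat.not_lt_zero _)

lemma tg_fixes {d x : Vn n} (h : Bf x d = 0) : Tm d *ᵥ x = x := by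
  rw [Tm_mulVec, h, zero_smul, add_zero]

lemma tg_moves {d x : Vn n} (h : Bf x d = 1) : Tm d *ᵥ x = x + d := by
  rw [Tm_mulVec, h, one_smul]

lemma exists_partner {k : ℕ} {x : Vn n} (hx : x ≠ 0) (hs : Supp k x) :
    ∃ c : Vn n, Supp k c ∧ Bf x c = 1 := by
  obtain ⟨idx, hidx⟩ := Function.ne_iff.mp hx
  simp only [Pi.zero_apply] at hidx
  cases idx with
  | inl i =>
    refine ⟨fb i, ?_, ?_⟩
    · intro j hj
      have hik : ¬ (i : ℕ) < k := fun h => hidx (hs i h).1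
      constructor
      · simp [fb, Pi.single_apply]
      · simp only [fb, Pi.single_apply]
        rw [if_neg]
        intro h
        rw [Sum.inr.injEq] at h
        exact hik (h ▸ hj)
    · rw [Bf_fb]; exact F2_ne_zero hidx
  | inr i =>
    refine ⟨eb i, ?_, ?_⟩
    · intro j hj
      have hik : ¬ (i : ℕ) < k := fun h => hidx (hs i h).2
      constructor
      · simp only [eb, Pi.single_apply]
        rw [if_neg]
        intro h
        rw [Sum.inl.injEq] at h
        exact hik (h ▸ hj)
      · simp [eb, Pi.single_apply]
    · rw [Bf_eb]; exact F2_ne_zero hidx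

lemma mulVec_coe_mul (g h : Gp n) (x : Vn n) :
    (g * h : Gp n).1 *ᵥ x
      = (g).1 *ᵥ ((h).1 *ᵥ x) := by
  rw [coe_mul', ← Matrix.mulVec_mulVec]

/-- move `u` to `v` by a product of transvections supported above `k`. -/
lemma moveVec (k : ℕ) {u v : Vn n} (hu : u ≠ 0) (hv : v ≠ 0)
    (hsu : Supp k u) (hsv : Supp k v) :
    ∃ w : Gp n, w ∈ Wgp n ∧ (w).1 *ᵥ u = v ∧
      ∀ x : Vn n, (∀ c : Vn n, Supp k c → Bf x c = 0) → (w).1 *ᵥ x = x := by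
  by_cases huv : u = v
  · exact ⟨1, one_mem _, by rw [coe_one', Matrix.one_mulVec, huv],
      fun x _ => by rw [coe_one', Matrix.one_mulVec]⟩
  rcases F2_cases (Bf u v) with h0 | h1
  swap
  · refine ⟨tg (u + v), tg_mem_W _, ?_, ?_⟩
    · rw [tg_coe, tg_moves, add_add_cancel]
      rw [Bf_add_right, Bf_self, zero_add, h1]
    · intro x hx
      rw [tg_coe]
      exact tg_fixes (hx _ (Supp_add hsu hsv))
  · -- find c with Bf u c = 1, Bf c v = 1, Supp k c
    obtain ⟨c₁, hc₁s, hc₁⟩ := exists_partner hu hsu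
    obtain ⟨c₂, hc₂s, hc₂⟩ := exists_partner hv hsv
    have hc₂' : Bf c₂ v = 1 := by rw [Bf_comm]; exact hc₂
    obtain ⟨c, hcs, hc1, hc2⟩ : ∃ c : Vn n, Supp k c ∧ Bf u c = 1 ∧ Bf c v = 1 := by
      rcases F2_cases (Bf u c₂) with h | h
      · rcases F2_cases (Bf c₁ v) with h' | h'
        · refine ⟨c₁ + c₂, Supp_add hc₁s hc₂s, ?_, ?_⟩
          · rw [Bf_add_right, hc₁, h, add_zero]
          · rw [Bf_add_left, h', hc₂', zero_add]
        · exact ⟨c₁, hc₁s, hc₁, h'⟩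
      · exact ⟨c₂, hc₂s, h, hc₂'⟩
    refine ⟨tg (c + v) * tg (u + c), mul_mem (tg_mem_W _) (tg_mem_W _), ?_, ?_⟩
    · rw [mulVec_coe_mul, tg_coe, tg_coe]
      have s1 : Tm (u + c) *ᵥ u = c := by
        rw [tg_moves, add_add_cancel]
        rw [Bf_add_right, Bf_self, zero_add, hc1]
      have s2 : Tm (c + v) *ᵥ c = v := by
        rw [tg_moves, add_add_cancel]
        rw [Bf_add_right, Bf_self, zero_add, hc2]
      rw [s1, s2]
    · intro x hx
      rw [mulVec_coe_mul, tg_coe, tg_coe,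
        tg_fixes (hx _ (Supp_add hsu hcs)), tg_fixes (hx _ (Supp_add hcs hsv))]

/-- move `b` to `b'` fixing `a`, by transvections supported above `k`. -/
lemma moveVec2 (k : ℕ) {a b b' : Vn n} (hab : Bf a b = 1) (hab' : Bf a b' = 1)
    (hsa : Supp k a) (hsb : Supp k b) (hsb' : Supp k b') :
    ∃ w : Gp n, w ∈ Wgp n ∧ (w).1 *ᵥ a = a ∧
      (w).1 *ᵥ b = b' ∧
      ∀ x : Vn n, (∀ c : Vn n, Supp k c → Bf x c = 0) → (w).1 *ᵥ x = x := by
  by_cases hbb : b = b'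
  · exact ⟨1, one_mem _, by rw [coe_one', Matrix.one_mulVec],
      by rw [coe_one', Matrix.one_mulVec, hbb], fun x _ => by rw [coe_one', Matrix.one_mulVec]⟩
  rcases F2_cases (Bf b b') with h0 | h1
  swap
  · refine ⟨tg (b + b'), tg_mem_W _, ?_, ?_, ?_⟩
    · rw [tg_coe]
      apply tg_fixes
      rw [Bf_add_right, hab, hab', F2_add_self]
    · rw [tg_coe, tg_moves, add_add_cancel]
      rw [Bf_add_right, Bf_self, zero_add, h1]
    · intro x hx
      rw [tg_coe]
      exact tg_fixes (hx _ (Supp_add hsb hsb'))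
  · -- w = tg (a + b + b') * tg a ; c := a + b
    have hba : Bf b a = 1 := by rw [Bf_comm]; exact hab
    refine ⟨tg (a + b + b') * tg a, mul_mem (tg_mem_W _) (tg_mem_W _), ?_, ?_, ?_⟩
    · rw [mulVec_coe_mul, tg_coe, tg_coe, tg_fixes (Bf_self a)]
      apply tg_fixes
      simp only [Bf_add_right, Bf_self, hab, hab']
      decide
    · rw [mulVec_coe_mul, tg_coe, tg_coe, tg_moves hba]
      have hfin : Bf (b + a) (a + b + b') = 1 := by
        simp only [Bf_add_left, Bf_add_right, Bf_self, hab, hab', hba, h0]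
        decide
      rw [tg_moves hfin]
      funext i
      simp only [Pi.add_apply]
      have : ∀ p q r : F2, p + q + (q + p + r) = r := by decide
      rw [show b i + a i + (a i + b i + b' i) = b' i from this (b i) (a i) (b' i)]
    · intro x hx
      rw [mulVec_coe_mul, tg_coe, tg_coe, tg_fixes (hx _ hsa),
        tg_fixes (hx _ (Supp_add (Supp_add hsa hsb) hsb'))]

lemma perp_of_supp {k : ℕ} {i : Fin n} (hi : (i : ℕ) < k) :
    (∀ c : Vn n, Supp k c → Bf (eb i) c = 0) ∧ ∀ c : Vn n, Supp k c → Bf (fb i) c = 0 := by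
  constructor <;> intro c hc
  · rw [Bf_comm, Bf_eb]; exact (hc i hi).2
  · rw [Bf_comm, Bf_fb]; exact (hc i hi).1

lemma eq_one_of_fixes {g : Gp n}
    (h : ∀ i : Fin n, (g).1 *ᵥ eb i = eb i ∧ (g).1 *ᵥ fb i = fb i) :
    g = 1 := by
  apply Subtype.ext
  show (g).1 = 1
  ext i j
  have key : ∀ j' : Fin n ⊕ Fin n, (g).1 *ᵥ Pi.single j' 1 = Pi.single j' 1 := by
    intro j'
    cases j' with
    | inl a => exact (h a).1
    | inr a => exact (h a).2
  have h2 := congrFun (key j) i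
  rw [Matrix.mulVec_single_one] at h2
  change (g).1 i j = (Pi.single j (1 : F2) : Vn n) i at h2
  rw [h2, Matrix.one_apply, Pi.single_apply]

lemma gen_aux : ∀ m k : ℕ, n ≤ k + m → ∀ g : Gp n,
    (∀ i : Fin n, (i : ℕ) < k →
      (g).1 *ᵥ eb i = eb i ∧ (g).1 *ᵥ fb i = fb i) →
    g ∈ Wgp n := by
  intro m
  induction m with
  | zero =>
    intro k hk g hg
    have : g = 1 := eq_one_of_fixes fun i => hg i (lt_of_lt_of_le i.isLt (by omega))
    rw [this]; exact one_mem _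
  | succ m ih =>
    intro k hk g hg
    by_cases hkn : n ≤ k
    · have : g = 1 := eq_one_of_fixes fun i => hg i (lt_of_lt_of_le i.isLt hkn)
      rw [this]; exact one_mem _
    push_neg at hkn
    set kk : Fin n := ⟨k, hkn⟩ with hkk
    -- step 1 : move g e_k back to e_k
    set u : Vn n := (g).1 *ᵥ eb kk with hu
    have hu0 : u ≠ 0 := mulVec_ne_zero g (eb_ne_zero kk)
    have hgfix : ∀ i : Fin n, (i : ℕ) < k → ∀ y : Vn n,
        Bf ((g).1 *ᵥ y) (eb i) = Bf y (eb i) ∧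
        Bf ((g).1 *ᵥ y) (fb i) = Bf y (fb i) := by
      intro i hi y
      constructor
      · conv_lhs => rw [← (hg i hi).1]
        rw [Bf_comm, Bf_mulVec g.2, Bf_comm]
      · conv_lhs => rw [← (hg i hi).2]
        rw [Bf_comm, Bf_mulVec g.2, Bf_comm]
    have hsupp_mulVec : ∀ y : Vn n, Supp k y → Supp k ((g).1 *ᵥ y) := by
      intro y hy i hi
      have h1 := (hgfix i hi y).1
      have h2 := (hgfix i hi y).2
      rw [Bf_eb, Bf_eb] at h1
      rw [Bf_fb, Bf_fb] at h2
      exact ⟨h2.trans (hy i hi).1, h1.trans (hy i hi).2⟩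
    have hsuppek : Supp k (eb kk) := by
      intro i hi
      constructor
      · simp only [eb, Pi.single_apply]
        rw [if_neg]
        intro h
        rw [Sum.inl.injEq] at h
        subst h
        have hkkv : (kk : ℕ) = k := rfl
        omega
      · simp [eb, Pi.single_apply]
    have hsuppfk : Supp k (fb kk) := by
      intro i hi
      constructor
      · simp [fb, Pi.single_apply]
      · simp only [fb, Pi.single_apply]
        rw [if_neg]
        intro h
        rw [Sum.inr.injEq] at h
        subst h
        have hkkv : (kk : ℕ) = k := rfl
        omega
    have hsu : Supp k u := hsupp_mulVec _ hsuppek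
    obtain ⟨w₁, hw₁W, hw₁u, hw₁fix⟩ := moveVec k hu0 (eb_ne_zero kk) hsu hsuppek
    set g₁ : Gp n := w₁ * g with hg₁
    have hg₁fix : ∀ i : Fin n, (i : ℕ) < k →
        ((g₁).1 *ᵥ eb i = eb i ∧ (g₁).1 *ᵥ fb i = fb i) := by
      intro i hi
      rw [hg₁]
      constructor
      · rw [mulVec_coe_mul, (hg i hi).1, hw₁fix _ (perp_of_supp hi).1]
      · rw [mulVec_coe_mul, (hg i hi).2, hw₁fix _ (perp_of_supp hi).2]
    have hg₁ek : (g₁).1 *ᵥ eb kk = eb kk := by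
      rw [hg₁, mulVec_coe_mul, ← hu, hw₁u]
    -- step 2 : move g₁ f_k back to f_k fixing e_k
    set b : Vn n := (g₁).1 *ᵥ fb kk with hb
    have hBek : Bf (eb kk) b = 1 := by
      have : Bf ((g₁).1 *ᵥ eb kk) ((g₁).1 *ᵥ fb kk)
          = Bf (eb kk) (fb kk) := Bf_mulVec g₁.2 _ _
      rw [hg₁ek] at this
      rw [hb, this, Bf_fb]
      simp [eb]
    have hBek' : Bf (eb kk) (fb kk) = 1 := by
      rw [Bf_fb]; simp [eb]
    have hg₁fix' : ∀ i : Fin n, (i : ℕ) < k → ∀ y : Vn n,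
        Bf ((g₁).1 *ᵥ y) (eb i) = Bf y (eb i) ∧
        Bf ((g₁).1 *ᵥ y) (fb i) = Bf y (fb i) := by
      intro i hi y
      constructor
      · conv_lhs => rw [← (hg₁fix i hi).1]
        rw [Bf_comm, Bf_mulVec g₁.2, Bf_comm]
      · conv_lhs => rw [← (hg₁fix i hi).2]
        rw [Bf_comm, Bf_mulVec g₁.2, Bf_comm]
    have hsb : Supp k b := by
      intro i hi
      have h1 := (hg₁fix' i hi (fb kk)).1
      have h2 := (hg₁fix' i hi (fb kk)).2
      rw [Bf_eb, Bf_eb] at h1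
      rw [Bf_fb, Bf_fb] at h2
      refine ⟨h2.trans ?_, h1.trans ?_⟩ <;> [skip; skip]
      · exact (hsuppfk i hi).1
      · exact (hsuppfk i hi).2
    obtain ⟨w₂, hw₂W, hw₂a, hw₂b, hw₂fix⟩ := moveVec2 k hBek hBek' hsuppek hsb hsuppfk
    set g₂ : Gp n := w₂ * g₁ with hg₂
    have hg₂fix : ∀ i : Fin n, (i : ℕ) < k + 1 →
        ((g₂).1 *ᵥ eb i = eb i ∧ (g₂).1 *ᵥ fb i = fb i) := by
      intro i hi
      rcases Nat.lt_or_ge (i : ℕ) k with h | h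
      · constructor
        · rw [hg₂, mulVec_coe_mul, (hg₁fix i h).1, hw₂fix _ (perp_of_supp h).1]
        · rw [hg₂, mulVec_coe_mul, (hg₁fix i h).2, hw₂fix _ (perp_of_supp h).2]
      · have hik : (i : ℕ) = k := by omega
        have : i = kk := by
          apply Fin.ext
          rw [hik, hkk]
        subst this
        constructor
        · rw [hg₂, mulVec_coe_mul, hg₁ek, hw₂a]
        · rw [hg₂, mulVec_coe_mul, ← hb, hw₂b]
    have hg₂W : g₂ ∈ Wgp n := ih (k + 1) (by omega) g₂ hg₂fix
    have : g = w₁⁻¹ * (w₂⁻¹ * g₂) := by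
      rw [hg₂, hg₁]
      group
    rw [this]
    exact mul_mem (inv_mem hw₁W) (mul_mem (inv_mem hw₂W) hg₂W)

theorem gen_top (g : Gp n) : g ∈ Wgp n :=
  gen_aux n 0 (by omega) g (fun i hi => absurd hi (Nat.not_lt_zero _))


lemma Am_mul (u w : Vn n) : Am u * Am w = Bf w u • vecMulVec u ((Matrix.J (Fin n) F2) *ᵥ w) := by
  rw [Am, Am, vecMulVec_mul_vecMulVec]
  congr 1
  rw [dotProduct_comm]
  rfl

lemma Am_mul_zero {u w : Vn n} (h : Bf w u = 0) : Am u * Am w = 0 := by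
  rw [Am_mul, h, zero_smul]

/-- the key "odd relation": a transvection is a product of six transvections. -/
lemma Tm_relation {a b c : Vn n} (hab : Bf a b = 0) (hac : Bf a c = 0) (hbc : Bf b c = 0) :
    Tm b * Tm (a + b) * Tm c * Tm (a + c) * Tm (b + c) * Tm (a + b + c) = Tm a := by
  have hba : Bf b a = 0 := by rw [Bf_comm]; exact hab
  have hca : Bf c a = 0 := by rw [Bf_comm]; exact hac
  have hcb : Bf c b = 0 := by rw [Bf_comm]; exact hbc
  -- all pairwise forms vanish on the span
  have hZ : ∀ u w : Vn n, u ∈ [a, b, c, a+b, a+c, b+c, a+b+c] →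
      w ∈ [a, b, c, a+b, a+c, b+c, a+b+c] → Bf w u = 0 := by
    intro u w hu hw
    fin_cases hu <;> fin_cases hw <;>
      simp [Bf_add_left, Bf_add_right, Bf_self, hab, hac, hbc, hba, hca, hcb]
  have hmem : ∀ u : Vn n, u ∈ [a, b, c, a+b, a+c, b+c, a+b+c] →
      ∀ w : Vn n, w ∈ [a, b, c, a+b, a+c, b+c, a+b+c] → Am u * Am w = 0 :=
    fun u hu w hw => Am_mul_zero (hZ u w hu hw)
  -- step products
  have step : ∀ S X : Matrix (Fin n ⊕ Fin n) (Fin n ⊕ Fin n) F2,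
      S * X = 0 → (1 + S) * (1 + X) = 1 + (S + X) := by
    intro S X h
    rw [add_mul, mul_add, mul_add, one_mul, one_mul, mul_one, h, add_zero]
    rw [add_assoc, add_comm X S]
  simp only [Tm]
  have l1 : a + b ∈ [a, b, c, a+b, a+c, b+c, a+b+c] := by simp
  have l2 : a + c ∈ [a, b, c, a+b, a+c, b+c, a+b+c] := by simp
  have l3 : b + c ∈ [a, b, c, a+b, a+c, b+c, a+b+c] := by simp
  have l4 : a + b + c ∈ [a, b, c, a+b, a+c, b+c, a+b+c] := by simp
  have la : a ∈ [a, b, c, a+b, a+c, b+c, a+b+c] := by simp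
  have lb : b ∈ [a, b, c, a+b, a+c, b+c, a+b+c] := by simp
  have lc : c ∈ [a, b, c, a+b, a+c, b+c, a+b+c] := by simp
  have e1 : (1 + Am b) * (1 + Am (a + b)) = 1 + (Am b + Am (a + b)) :=
    step _ _ (hmem _ lb _ l1)
  have e2 : (1 + (Am b + Am (a + b))) * (1 + Am c) = 1 + (Am b + Am (a + b) + Am c) := by
    have : (Am b + Am (a + b)) * Am c = 0 := by
      rw [add_mul, hmem _ lb _ lc, hmem _ l1 _ lc, add_zero]
    rw [step _ _ this, add_assoc (Am b)]
  have e3 : (1 + (Am b + Am (a + b) + Am c)) * (1 + Am (a + c))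
      = 1 + (Am b + Am (a + b) + Am c + Am (a + c)) := by
    have : (Am b + Am (a + b) + Am c) * Am (a + c) = 0 := by
      rw [add_mul, add_mul, hmem _ lb _ l2, hmem _ l1 _ l2, hmem _ lc _ l2, add_zero, add_zero]
    rw [step _ _ this]
  have e4 : (1 + (Am b + Am (a + b) + Am c + Am (a + c))) * (1 + Am (b + c))
      = 1 + (Am b + Am (a + b) + Am c + Am (a + c) + Am (b + c)) := by
    have : (Am b + Am (a + b) + Am c + Am (a + c)) * Am (b + c) = 0 := by
      rw [add_mul, add_mul, add_mul, hmem _ lb _ l3, hmem _ l1 _ l3, hmem _ lc _ l3,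
        hmem _ l2 _ l3, add_zero, add_zero, add_zero]
    rw [step _ _ this]
  have e5 : (1 + (Am b + Am (a + b) + Am c + Am (a + c) + Am (b + c))) * (1 + Am (a + b + c))
      = 1 + (Am b + Am (a + b) + Am c + Am (a + c) + Am (b + c) + Am (a + b + c)) := by
    have : (Am b + Am (a + b) + Am c + Am (a + c) + Am (b + c)) * Am (a + b + c) = 0 := by
      rw [add_mul, add_mul, add_mul, add_mul, hmem _ lb _ l4, hmem _ l1 _ l4, hmem _ lc _ l4,
        hmem _ l2 _ l4, hmem _ l3 _ l4, add_zero, add_zero, add_zero, add_zero]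
    rw [step _ _ this]
  rw [e1, e2, e3, e4, e5]
  congr 1
  -- the sum identity, entrywise over F2
  ext i j
  simp only [Am, Matrix.add_apply, vecMulVec_apply, Matrix.mulVec_add, Pi.add_apply]
  generalize a i = xa
  generalize b i = xb
  generalize c i = xc
  generalize (Matrix.J (Fin n) F2 *ᵥ a) j = ya
  generalize (Matrix.J (Fin n) F2 *ᵥ b) j = yb
  generalize (Matrix.J (Fin n) F2 *ᵥ c) j = yc
  revert xa xb xc ya yb yc
  decide

lemma F2_add_eq_zero {u v : F2} (h : u + v = 0) : u = v := by revert h; revert u v; decide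

lemma vec_eq_of_add_eq_zero {x y : Vn n} (h : x + y = 0) : x = y := by
  funext i
  exact F2_add_eq_zero (congrFun h i)

lemma tg_zero : tg (0 : Vn n) = 1 := Subtype.ext Tm_zero

lemma ne_zero_of_apply {x : Vn n} {i : Fin n ⊕ Fin n} (h : x i ≠ 0) : x ≠ 0 := by
  intro h0; exact h (by rw [h0]; rfl)

lemma tg_conj_id {a b : Vn n} (h : Bf b a = 1) : tg a * tg b * tg a = tg (a + b) := by
  conv_lhs => rw [show tg a * tg b * tg a = tg a * tg b * (tg a)⁻¹ by rw [tg_inv]]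
  rw [conj_tg (tg a) b]
  show tg (Tm a *ᵥ b) = tg (a + b)
  rw [tg_moves h, add_comm]

theorem normal_top (hn : 3 ≤ n) (N : Subgroup (Gp n)) (hN : N.Normal)
    {g₀ : Gp n} (hg₀ : g₀ ∈ N) (hne : g₀ ≠ 1) : N = ⊤ := by
  classical
  -- Step A : commutators with transvections
  have pairN : ∀ v : Vn n, tg ((g₀).1 *ᵥ v) * tg v ∈ N := by
    intro v
    have h1 : tg v * g₀⁻¹ * (tg v)⁻¹ ∈ N := hN.conj_mem _ (inv_mem hg₀) (tg v)
    have h2 : g₀ * (tg v * g₀⁻¹ * (tg v)⁻¹) ∈ N := mul_mem hg₀ h1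
    have h3 : g₀ * (tg v * g₀⁻¹ * (tg v)⁻¹) = (g₀ * tg v * g₀⁻¹) * (tg v)⁻¹ := by group
    rw [h3, conj_tg, tg_inv] at h2
    exact h2
  -- Step B : find a moved basis vector
  obtain ⟨x, hx0, hxy⟩ : ∃ x : Vn n, x ≠ 0 ∧ (g₀).1 *ᵥ x ≠ x := by
    by_contra hcon
    push_neg at hcon
    apply hne
    apply eq_one_of_fixes
    intro i
    exact ⟨hcon (eb i) (eb_ne_zero i), hcon (fb i) (by
      intro h
      have := congrFun h (Sum.inr i)
      simp [fb] at this)⟩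
  set y : Vn n := (g₀).1 *ᵥ x with hy
  have hy0 : y ≠ 0 := mulVec_ne_zero g₀ hx0
  have hc₀ : tg y * tg x ∈ N := pairN x
  -- Step C : upgrade to a hyperbolic pair
  obtain ⟨X, Y, hX0, hY0, hBXY, hcN⟩ :
      ∃ X Y : Vn n, X ≠ 0 ∧ Y ≠ 0 ∧ Bf X Y = 1 ∧ tg Y * tg X ∈ N := by
    rcases F2_cases (Bf x y) with h0 | h1
    swap
    · exact ⟨x, y, hx0, hy0, h1, hc₀⟩
    · -- find d with Bf x d = 0 and Bf y d = 1
      obtain ⟨d, hdx, hdy⟩ : ∃ d : Vn n, Bf x d = 0 ∧ Bf y d = 1 := by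
        obtain ⟨p, -, hp⟩ := exists_partner hy0 (Supp_zero_all y)
        rcases F2_cases (Bf x p) with hxp | hxp
        · exact ⟨p, hxp, hp⟩
        · have hxy0 : x + y ≠ 0 := fun h => hxy (vec_eq_of_add_eq_zero h).symm
          obtain ⟨q, -, hq⟩ := exists_partner hxy0 (Supp_zero_all _)
          rw [Bf_add_left] at hq
          rcases F2_cases (Bf y q) with hyq | hyq
          · refine ⟨p + q, ?_, ?_⟩
            · rw [Bf_add_right, hxp]
              rw [hyq, add_zero] at hq
              rw [hq]; decide
            · rw [Bf_add_right, hp, hyq, add_zero]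
          · refine ⟨q, ?_, hyq⟩
            rw [hyq] at hq
            have : Bf x q = 0 := by
              rcases F2_cases (Bf x q) with h | h
              · exact h
              · rw [h] at hq; exact absurd hq (by decide)
            exact this
      -- conjugate the pair by tg d
      have key : tg d * (tg y * tg x) * (tg d)⁻¹ * (tg y * tg x)⁻¹ ∈ N := by
        apply mul_mem
        · exact hN.conj_mem _ hc₀ (tg d)
        · exact inv_mem hc₀
      have expand : tg d * (tg y * tg x) * (tg d)⁻¹ * (tg y * tg x)⁻¹
          = (tg d * tg y * (tg d)⁻¹) * (tg d * tg x * (tg d)⁻¹) * ((tg x)⁻¹ * (tg y)⁻¹) := by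
        group
      rw [expand, conj_tg, conj_tg, tg_inv, tg_inv] at key
      have ht1 : (tg d).1 *ᵥ y = y + d := tg_moves hdy
      have ht2 : (tg d).1 *ᵥ x = x := tg_fixes hdx
      rw [ht1, ht2] at key
      have collapse : tg (y + d) * tg x * (tg x * tg y) = tg (y + d) * tg y := by
        rw [show tg (y + d) * tg x * (tg x * tg y) = tg (y + d) * (tg x * tg x) * tg y by group,
          tg_sq, mul_one]
      rw [collapse] at key
      refine ⟨y, y + d, hy0, ?_, ?_, key⟩
      · intro h
        have : y = d := vec_eq_of_add_eq_zero h
        rw [← this] at hdy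
        rw [Bf_self] at hdy
        exact absurd hdy (by decide)
      · rw [Bf_add_right, Bf_self, zero_add, hdy]
  -- Step D : all transvection pairs over the "affine hyperplane" Bf X · = 1
  have pair1 : ∀ z : Vn n, Bf X z = 1 → tg z * tg Y ∈ N := by
    intro z hz
    by_cases hzY : z = Y
    · rw [hzY, tg_sq]; exact one_mem N
    obtain ⟨w, -, hwX, hwY, -⟩ :=
      moveVec2 0 hBXY hz (Supp_zero_all X) (Supp_zero_all Y) (Supp_zero_all z)
    have key : w * (tg Y * tg X) * w⁻¹ * (tg Y * tg X)⁻¹ ∈ N :=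
      mul_mem (hN.conj_mem _ hcN w) (inv_mem hcN)
    have expand : w * (tg Y * tg X) * w⁻¹ * (tg Y * tg X)⁻¹
        = (w * tg Y * w⁻¹) * (w * tg X * w⁻¹) * ((tg X)⁻¹ * (tg Y)⁻¹) := by group
    rw [expand, conj_tg, conj_tg, tg_inv, tg_inv, hwX, hwY] at key
    have collapse : tg z * tg X * (tg X * tg Y) = tg z * tg Y := by
      rw [show tg z * tg X * (tg X * tg Y) = tg z * (tg X * tg X) * tg Y by group, tg_sq, mul_one]
    rw [collapse] at key
    exact key
  have pair2 : ∀ z z' : Vn n, Bf X z = 1 → Bf X z' = 1 → tg z * tg z' ∈ N := by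
    intro z z' hz hz'
    have h1 := pair1 z hz
    have h2 := pair1 z' hz'
    have : (tg z * tg Y) * (tg z' * tg Y)⁻¹ = tg z * tg z' := by
      rw [_root_.mul_inv_rev, tg_inv, tg_inv]
      rw [show tg z * tg Y * (tg Y * tg z') = tg z * (tg Y * tg Y) * tg z' by group, tg_sq,
        mul_one]
    rw [← this]
    exact mul_mem h1 (inv_mem h2)
  -- Step E : uniform decomposition into three transvections over the hyperplane
  have decomp : ∀ v : Vn n, v ≠ 0 → ∃ p q r : Vn n,
      Bf X p = 1 ∧ Bf X q = 1 ∧ Bf X r = 1 ∧ tg v = tg p * tg q * tg r := by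
    intro v hv
    rcases F2_cases (Bf X v) with h0 | h1
    swap
    · refine ⟨v, Y, Y, h1, hBXY, hBXY, ?_⟩
      rw [show tg v * tg Y * tg Y = tg v * (tg Y * tg Y) by group, tg_sq, mul_one]
    · -- find m with Bf X m = 1, Bf v m = 1
      obtain ⟨m, hm1, hm2⟩ : ∃ m : Vn n, Bf X m = 1 ∧ Bf v m = 1 := by
        by_cases hvX : v = X
        · obtain ⟨p, -, hp⟩ := exists_partner hX0 (Supp_zero_all X)
          exact ⟨p, hp, by rw [hvX]; exact hp⟩
        · obtain ⟨p, -, hp⟩ := exists_partner hX0 (Supp_zero_all X)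
          obtain ⟨q, -, hq⟩ := exists_partner hv (Supp_zero_all v)
          rcases F2_cases (Bf v p) with hvp | hvp
          · rcases F2_cases (Bf X q) with hXq | hXq
            · refine ⟨p + q, ?_, ?_⟩
              · rw [Bf_add_right, hp, hXq, add_zero]
              · rw [Bf_add_right, hvp, hq, zero_add]
            · exact ⟨q, hXq, hq⟩
          · exact ⟨p, hp, hvp⟩
      refine ⟨v + m, m, v + m, ?_, hm1, ?_, ?_⟩
      · rw [Bf_add_right, h0, zero_add, hm1]
      · rw [Bf_add_right, h0, zero_add, hm1]
      · have hba : Bf m (v + m) = 1 := by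
          rw [Bf_comm, Bf_add_left, Bf_self, add_zero, Bf_comm, Bf_comm m v, hm2]
        rw [tg_conj_id hba]
        congr 1
        rw [add_assoc, vec_add_self, add_zero]
  -- Step F : all pairs of transvections are in N
  have allpairs : ∀ v w : Vn n, v ≠ 0 → w ≠ 0 → tg v * tg w ∈ N := by
    intro v w hv hw
    obtain ⟨p, q, r, hp, hq, hr, hdv⟩ := decomp v hv
    obtain ⟨p', q', r', hp', hq', hr', hdw⟩ := decomp w hw
    have : tg v * tg w = (tg p * tg q) * ((tg r * tg p') * (tg q' * tg r')) := by
      rw [hdv, hdw]; group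
    rw [this]
    exact mul_mem (pair2 _ _ hp hq) (mul_mem (pair2 _ _ hr hp') (pair2 _ _ hq' hr'))
  -- Step G : a single transvection is in N (odd relation)
  set i0 : Fin n := ⟨0, by omega⟩ with hi0
  set i1 : Fin n := ⟨1, by omega⟩ with hi1
  set i2 : Fin n := ⟨2, by omega⟩ with hi2
  set a : Vn n := eb i0 with ha
  set b : Vn n := eb i1 with hb
  set c : Vn n := eb i2 with hc
  have hBab : Bf a b = 0 := by rw [hb, Bf_eb, ha]; simp [eb, Pi.single_apply]
  have hBac : Bf a c = 0 := by rw [hc, Bf_eb, ha]; simp [eb, Pi.single_apply]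
  have hBbc : Bf b c = 0 := by rw [hc, Bf_eb, hb]; simp [eb, Pi.single_apply]
  have grel : tg b * tg (a + b) * tg c * tg (a + c) * tg (b + c) * tg (a + b + c) = tg a :=
    Subtype.ext (Tm_relation hBab hBac hBbc)
  have h01 : i1 ≠ i0 := by rw [hi0, hi1, Fin.ne_iff_vne]; show (1:ℕ) ≠ (0:ℕ); omega
  have h02 : i2 ≠ i0 := by rw [hi0, hi2, Fin.ne_iff_vne]; show (2:ℕ) ≠ (0:ℕ); omega
  have h12 : i2 ≠ i1 := by rw [hi1, hi2, Fin.ne_iff_vne]; show (2:ℕ) ≠ (1:ℕ); omega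
  have hab0 : a + b ≠ 0 := by
    apply ne_zero_of_apply (i := Sum.inl i1)
    rw [Pi.add_apply, ha, hb]
    simp [eb, Pi.single_apply, h01]
  have hac0 : a + c ≠ 0 := by
    apply ne_zero_of_apply (i := Sum.inl i2)
    rw [Pi.add_apply, ha, hc]
    simp [eb, Pi.single_apply, h02]
  have hbc0 : b + c ≠ 0 := by
    apply ne_zero_of_apply (i := Sum.inl i2)
    rw [Pi.add_apply, hb, hc]
    simp [eb, Pi.single_apply, h12]
  have habc0 : a + b + c ≠ 0 := by
    apply ne_zero_of_apply (i := Sum.inl i2)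
    rw [Pi.add_apply, Pi.add_apply, ha, hb, hc]
    simp [eb, Pi.single_apply, h02, h12]
  have htga : tg a ∈ N := by
    rw [← grel]
    have hassoc : tg b * tg (a + b) * tg c * tg (a + c) * tg (b + c) * tg (a + b + c)
        = (tg b * tg (a + b)) * ((tg c * tg (a + c)) * (tg (b + c) * tg (a + b + c))) := by
      group
    rw [hassoc]
    exact mul_mem (allpairs _ _ (eb_ne_zero i1) hab0)
      (mul_mem (allpairs _ _ (eb_ne_zero i2) hac0) (allpairs _ _ hbc0 habc0))
  -- Step H : every transvection is in N
  have alltg : ∀ v : Vn n, v ≠ 0 → tg v ∈ N := by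
    intro v hv
    obtain ⟨w, -, hw, -⟩ :=
      moveVec 0 (eb_ne_zero i0) hv (Supp_zero_all _) (Supp_zero_all _)
    have hconj : w * tg a * w⁻¹ ∈ N := hN.conj_mem _ htga w
    rw [conj_tg] at hconj
    rw [ha] at hconj
    rw [hw] at hconj
    exact hconj
  -- Step I : N contains the subgroup generated by transvections, which is everything
  rw [eq_top_iff]
  intro g _hg
  have hWN : Wgp n ≤ N := by
    rw [Wgp]
    apply (Subgroup.closure_le N).mpr
    rintro - ⟨v, rfl⟩
    by_cases hv : v = 0
    · rw [hv, tg_zero]; exact one_mem N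
    · exact alltg v hv
  exact hWN (gen_top g)

/-- the doubled permutation matrix -/
def pm (σ : Equiv.Perm (Fin n)) : Matrix (Fin n ⊕ Fin n) (Fin n ⊕ Fin n) F2 :=
  Matrix.of fun i j => if i = Sum.map σ σ j then 1 else 0

lemma pm_one : pm (1 : Equiv.Perm (Fin n)) = 1 := by
  ext i j
  simp only [pm, Matrix.of_apply, Matrix.one_apply]
  cases j <;> simp [Sum.map, eq_comm]

lemma pm_mul (σ τ : Equiv.Perm (Fin n)) : pm (σ * τ) = pm σ * pm τ := by
  ext i j
  simp only [pm, Matrix.mul_apply, Matrix.of_apply, mul_ite, ite_mul, one_mul, mul_one,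
    mul_zero, zero_mul]
  rw [Finset.sum_ite_eq' Finset.univ (Sum.map τ τ j) (fun k => if i = Sum.map σ σ k then 1 else 0)]
  simp only [Finset.mem_univ, if_true]
  congr 1
  cases j <;> simp [Sum.map, Equiv.Perm.mul_apply]

lemma pm_mem (σ : Equiv.Perm (Fin n)) : pm σ ∈ Matrix.symplecticGroup (Fin n) F2 := by
  rw [SymplecticGroup.mem_iff']
  ext i j
  rw [Matrix.mul_assoc, Matrix.mul_apply]
  have h1 : ∀ k, (Matrix.J (Fin n) F2 * pm σ) k j = Matrix.J (Fin n) F2 k (Sum.map σ σ j) := by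
    intro k
    rw [Matrix.mul_apply]
    simp only [pm, Matrix.of_apply, mul_ite, mul_one, mul_zero]
    rw [Finset.sum_ite_eq' Finset.univ (Sum.map σ σ j) (fun l => Matrix.J (Fin n) F2 k l)]
    simp
  have h2 : ∑ k, (pm σ)ᵀ i k * (Matrix.J (Fin n) F2 * pm σ) k j
      = ∑ k, (if k = Sum.map σ σ i then (1 : F2) else 0)
          * Matrix.J (Fin n) F2 k (Sum.map σ σ j) := by
    apply Finset.sum_congr rfl
    intro k _
    rw [Matrix.transpose_apply, h1 k]
    rfl
  rw [h2]
  simp only [ite_mul, one_mul, zero_mul]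
  rw [Finset.sum_ite_eq' Finset.univ (Sum.map σ σ i)
    (fun k => Matrix.J (Fin n) F2 k (Sum.map σ σ j))]
  simp only [Finset.mem_univ, if_true]
  cases i <;> cases j <;>
    simp [Matrix.J, Matrix.fromBlocks, Sum.map, Matrix.one_apply]

def ρ : Equiv.Perm (Fin n) →* Gp n where
  toFun σ := ⟨pm σ, pm_mem σ⟩
  map_one' := Subtype.ext pm_one
  map_mul' σ τ := Subtype.ext (pm_mul σ τ)

lemma ρ_inj : Function.Injective (ρ (n := n)) := by
  intro σ τ h
  have h2 : pm σ = pm τ := congrArg Subtype.val h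
  apply Equiv.ext
  intro j
  have h3 := congrFun (congrFun h2 (Sum.inl (σ j))) (Sum.inl j)
  simp only [pm, Matrix.of_apply, Sum.map_inl, if_pos rfl] at h3
  by_contra hne
  simp only [if_true, Sum.inl.injEq, hne, if_false] at h3
  exact one_ne_zero h3

lemma pm_entry_zero (σ : Equiv.Perm (Fin n)) (i j : Fin n) :
    pm σ (Sum.inl i) (Sum.inr j) = 0 := by
  simp [pm, Sum.map]

lemma tg_eb_entry (hn : 1 ≤ n) (i0 : Fin n) :
    Tm (eb i0) (Sum.inl i0) (Sum.inr i0) = 1 := by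
  rw [Tm, Matrix.add_apply, Am, vecMulVec_apply, J_mulVec]
  simp [Matrix.one_apply, eb]

end TightSp

/-- Every nontrivial finite group `H` embeds into a finite superperfect group forming a
nontrivial tight pair: there are `n ≥ 4` and an injective homomorphism
`φ : H →* Sp(2n, 𝔽₂)` with proper image, such that the only normal subgroup of
`Sp(2n, 𝔽₂)` containing the image of `φ` is the whole group. -/
theorem finite_group_tight_pair_in_symplectic (H : Type*) [Group H] [Finite H]
    [Nontrivial H] :
    ∃ n : ℕ, 4 ≤ n ∧ ∃ φ : H →* Matrix.symplecticGroup (Fin n) (ZMod 2),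
      Function.Injective φ ∧ φ.range ≠ ⊤ ∧
      ∀ N : Subgroup (Matrix.symplecticGroup (Fin n) (ZMod 2)),
        N.Normal → φ.range ≤ N → N = ⊤ := by
  classical
  have : Fintype H := Fintype.ofFinite H
  set n : ℕ := max (Fintype.card H) 4 with hn
  have h4 : 4 ≤ n := le_max_right _ _
  have hcard : Fintype.card H ≤ n := le_max_left _ _
  refine ⟨n, h4, ?_⟩
  -- build the embedding
  let emb : H ↪ Fin n := (Fintype.equivFin H).toEmbedding.trans (Fin.castLEEmb hcard)
  let ψ : H →* Equiv.Perm (Fin n) :=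
    (Equiv.Perm.viaEmbeddingHom emb).comp (MulAction.toPermHom H H)
  let φ : H →* Matrix.symplecticGroup (Fin n) (ZMod 2) := (TightSp.ρ).comp ψ
  have hψinj : Function.Injective ψ := by
    apply Function.Injective.comp (Equiv.Perm.viaEmbeddingHom_injective emb)
    intro g1 g2 h
    have := congrArg (fun π : Equiv.Perm H => π 1) h
    simpa using this
  have hφinj : Function.Injective φ := fun a b hab => hψinj (TightSp.ρ_inj hab)
  refine ⟨φ, hφinj, ?_, ?_⟩
  · -- proper range
    intro htop
    set z : Fin n := ⟨0, by omega⟩ with hz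
    have hmem : TightSp.tg (TightSp.eb z) ∈ φ.range := by
      rw [htop]; trivial
    obtain ⟨h, hh⟩ := hmem
    have h2 : TightSp.pm (ψ h) = TightSp.Tm (TightSp.eb z) := congrArg Subtype.val hh
    have h3 := congrFun (congrFun h2 (Sum.inl z)) (Sum.inr z)
    rw [TightSp.pm_entry_zero, TightSp.tg_eb_entry (by omega)] at h3
    exact zero_ne_one h3
  · -- tightness
    intro N hN hle
    obtain ⟨h₀, hh₀⟩ := exists_ne (1 : H)
    refine TightSp.normal_top (by omega) N hN (g₀ := φ h₀) (hle ⟨h₀, rfl⟩) ?_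
    intro h
    exact hh₀ (hφinj (by rw [h, map_one]))
end

section
/- If G is a perfect group admitting a balanced presentation, i.e. a presentation with n generators and n relators for some n, then the second integral group homology of G vanishes: H₂(G; ℤ) = 0. (Hence a perfect group of deficiency zero is superperfect, and its presentation 2-complex is acyclic.) -/
section CocycleExt

variable {G : Type*} [Group G] {A : Type*} [AddCommGroup A]

/-- A (non-normalized) 2-cocycle on `G` with values in `A` (trivial action). -/
structure BarCocycle (G : Type*) [Group G] (A : Type*) [AddCommGroup A] : Type _ where
  c : G → G → A
  hc : ∀ g h k : G, c (g * h) k + c g h = c h k + c g (h * k)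

namespace BarCocycle

variable (γ : BarCocycle G A)

lemma c_one_right (g : G) : γ.c g 1 = γ.c 1 1 := by
  have h := γ.hc g 1 1
  simp only [mul_one, one_mul] at h
  exact add_right_cancel h

lemma c_one_left (g : G) : γ.c 1 g = γ.c 1 1 := by
  have h := γ.hc 1 1 g
  simp only [mul_one, one_mul] at h
  exact (add_left_cancel h).symm

lemma c_inv (g : G) : γ.c g⁻¹ g = γ.c g g⁻¹ := by
  have h := γ.hc g g⁻¹ g
  simp only [mul_inv_cancel, inv_mul_cancel] at h
  rw [γ.c_one_left g, γ.c_one_right g, add_comm (γ.c 1 1)] at h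
  exact (add_right_cancel h).symm

/-- The central extension of `G` by `A` built from the cocycle `γ`. -/
@[ext]
structure Ext (γ : BarCocycle G A) : Type _ where
  g : G
  a : A

instance : Group (Ext γ) where
  mul x y := ⟨x.g * y.g, x.a + y.a + γ.c x.g y.g⟩
  one := ⟨1, -γ.c 1 1⟩
  inv x := ⟨x.g⁻¹, -x.a - γ.c x.g x.g⁻¹ - γ.c 1 1⟩
  mul_assoc x y z := by
    refine Ext.ext (mul_assoc _ _ _) ?_
    show x.a + y.a + γ.c x.g y.g + z.a + γ.c (x.g * y.g) z.g
      = x.a + (y.a + z.a + γ.c y.g z.g) + γ.c x.g (y.g * z.g)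
    have := γ.hc x.g y.g z.g
    abel_nf
    linear_combination (norm := abel) this
  one_mul x := by
    refine Ext.ext (one_mul _) ?_
    show -γ.c 1 1 + x.a + γ.c 1 x.g = x.a
    rw [γ.c_one_left x.g]; abel
  mul_one x := by
    refine Ext.ext (mul_one _) ?_
    show x.a + -γ.c 1 1 + γ.c x.g 1 = x.a
    rw [γ.c_one_right x.g]; abel
  inv_mul_cancel x := by
    refine Ext.ext (inv_mul_cancel _) ?_
    show -x.a - γ.c x.g x.g⁻¹ - γ.c 1 1 + x.a + γ.c x.g⁻¹ x.g = -γ.c 1 1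
    rw [γ.c_inv]; abel

@[simp] lemma mul_g (x y : Ext γ) : (x * y).g = x.g * y.g := rfl
@[simp] lemma mul_a (x y : Ext γ) : (x * y).a = x.a + y.a + γ.c x.g y.g := rfl
@[simp] lemma one_g : (1 : Ext γ).g = 1 := rfl
@[simp] lemma one_a : (1 : Ext γ).a = -γ.c 1 1 := rfl

/-- Projection to `G`. -/
def proj : Ext γ →* G where
  toFun := Ext.g
  map_one' := rfl
  map_mul' _ _ := rfl

lemma central (z : A) (y : Ext γ) : (⟨1, z⟩ : Ext γ) * y = y * ⟨1, z⟩ := by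
  refine Ext.ext (by simp) ?_
  show z + y.a + γ.c 1 y.g = y.a + z + γ.c y.g 1
  rw [γ.c_one_left y.g, γ.c_one_right y.g]; abel

/-- The central embedding of `A`. -/
def cen : Multiplicative A →* Ext γ where
  toFun x := ⟨1, x.toAdd - γ.c 1 1⟩
  map_one' := by refine Ext.ext rfl ?_; show (0:A) - γ.c 1 1 = -γ.c 1 1; abel
  map_mul' x y := by
    refine Ext.ext (by simp) ?_
    show (x.toAdd + y.toAdd) - γ.c 1 1
      = (x.toAdd - γ.c 1 1) + (y.toAdd - γ.c 1 1) + γ.c 1 1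
    abel

@[simp] lemma cen_g (x : Multiplicative A) : (γ.cen x).g = 1 := rfl
@[simp] lemma cen_a (x : Multiplicative A) : (γ.cen x).a = x.toAdd - γ.c 1 1 := rfl

lemma cen_comm (x : Multiplicative A) (y : Ext γ) : γ.cen x * y = y * γ.cen x :=
  γ.central _ y

end BarCocycle

end CocycleExt


lemma hom_trivial_of_perfect {G : Type*} [Group G] (hperf : commutator G = ⊤)
    {C : Type*} [CommGroup C] (h : G →* C) (g : G) : h g = 1 := by
  have hle : commutator G ≤ h.ker := by
    rw [commutator, Subgroup.commutator_le]
    intro p _ q _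
    rw [MonoidHom.mem_ker, map_commutatorElement]
    exact commutatorElement_eq_one_iff_commute.mpr (mul_comm _ _)
  rw [hperf] at hle
  exact hle (Subgroup.mem_top g)

lemma pi_sum_single {n : ℕ} (x : Fin n → ℤ) :
    ∑ i, x i • Pi.single i (1 : ℤ) = x := by
  ext j
  rw [Finset.sum_apply, Finset.sum_eq_single j]
  · simp
  · intro i _ hij
    simp [Pi.single_apply, hij.symm]
  · simp

theorem BarCocycle.exists_coboundary {G : Type*} [Group G] (hperf : commutator G = ⊤)
    (n : ℕ) (rels : Finset (FreeGroup (Fin n))) (hcard : rels.card = n)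
    (e : G ≃* PresentedGroup (rels : Set (FreeGroup (Fin n))))
    {A : Type} [AddCommGroup A] (γ : BarCocycle G A) :
    ∃ f : G → A, ∀ g h, γ.c g h = f h - f (g * h) + f g := by
  classical
  let F := FreeGroup (Fin n)
  let π : F →* G := e.symm.toMonoidHom.comp (PresentedGroup.mk _)
  let d : F →* Multiplicative (Fin n → ℤ) :=
    FreeGroup.lift fun i => Multiplicative.ofAdd (Pi.single i 1)
  let dv : rels → (Fin n → ℤ) := fun r => (d r.1).toAdd
  -- the exponent-sum vectors of the relators span `ℤⁿ`
  have hspan : Submodule.span ℤ (Set.range dv) = ⊤ := by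
    set S := Submodule.span ℤ (Set.range dv) with hS
    have hsingle : ∀ i, Pi.single i (1 : ℤ) ∈ S := by
      intro i
      -- build a hom from `G` to the quotient
      let q : (Fin n → ℤ) →ₗ[ℤ] _ := S.mkQ
      let L : Multiplicative (Fin n → ℤ) →* Multiplicative ((Fin n → ℤ) ⧸ S) :=
        AddMonoidHom.toMultiplicative q.toAddMonoidHom
      have hrel : ∀ r ∈ (rels : Set F),
          FreeGroup.lift (fun i => Multiplicative.ofAdd (q (Pi.single i 1))) r = 1 := by
        intro r hr
        have hlift : FreeGroup.lift (fun i => Multiplicative.ofAdd (q (Pi.single i 1)))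
            = L.comp d := by
          apply FreeGroup.ext_hom
          intro a
          simp [L, d, q]
        rw [hlift]
        show Multiplicative.ofAdd (q (d r).toAdd) = 1
        have hmem : (d r).toAdd ∈ S := Submodule.subset_span ⟨⟨r, hr⟩, rfl⟩
        rw [Submodule.mkQ_apply, (Submodule.Quotient.mk_eq_zero S).mpr hmem, ofAdd_zero]
      let φP := PresentedGroup.toGroup hrel
      let hG := φP.comp e.toMonoidHom
      have htriv := hom_trivial_of_perfect hperf hG
      have : hG (e.symm (PresentedGroup.of i)) = Multiplicative.ofAdd (q (Pi.single i 1)) := by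
        show φP (e (e.symm (PresentedGroup.of i))) = _
        rw [MulEquiv.apply_symm_apply]
        exact PresentedGroup.toGroup.of hrel
      rw [htriv] at this
      have h0 : q (Pi.single i 1) = 0 := by
        have h1 : Multiplicative.ofAdd (q (Pi.single i 1)) = Multiplicative.ofAdd (0 : (Fin n → ℤ) ⧸ S) := by
          rw [ofAdd_zero]; exact this.symm
        exact Multiplicative.ofAdd.injective h1
      rwa [Submodule.mkQ_apply, Submodule.Quotient.mk_eq_zero] at h0
    rw [eq_top_iff]
    intro x _
    rw [← pi_sum_single x]
    exact Submodule.sum_mem _ fun i _ => Submodule.smul_mem _ _ (hsingle i)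
  -- the linear map sending a weight vector to the corresponding combination of relator vectors
  let T : (rels → ℤ) →ₗ[ℤ] (Fin n → ℤ) := Fintype.linearCombination ℤ dv
  have hTapp : ∀ u, T u = ∑ r, u r • dv r := fun u => rfl
  have hTsurj : Function.Surjective T := by
    rw [← LinearMap.range_eq_top, Fintype.range_linearCombination, hspan]
  let ε : rels ≃ Fin n := Fintype.equivFinOfCardEq (by simp [hcard])
  let Rq : (Fin n → ℤ) ≃ₗ[ℤ] (rels → ℤ) := LinearEquiv.funCongrLeft ℤ ℤ ε
  have hendo : Function.Surjective (T ∘ₗ Rq.toLinearMap) := by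
    exact hTsurj.comp Rq.surjective
  have hinjendo : Function.Injective (T ∘ₗ Rq.toLinearMap) :=
    IsNoetherian.injective_of_surjective_endomorphism _ hendo
  have hTinj : Function.Injective T := by
    intro x y hxy
    have := hinjendo (a₁ := Rq.symm x) (a₂ := Rq.symm y) (by
      show T (Rq (Rq.symm x)) = T (Rq (Rq.symm y))
      rw [Rq.apply_symm_apply, Rq.apply_symm_apply]; exact hxy)
    exact Rq.symm.injective this
  let B := LinearEquiv.ofBijective T ⟨hTinj, hTsurj⟩
  have hBapp : ∀ u, B u = T u := fun u => rfl
  have hBsingle : ∀ r : rels, B.symm (dv r) = Pi.single r 1 := by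
    intro r
    have hT1 : T (Pi.single r 1) = dv r := by
      rw [hTapp, Finset.sum_eq_single r]
      · simp
      · intro b _ hb
        simp [Pi.single_apply, hb]
      · simp
    rw [← hT1, ← hBapp]
    exact B.symm_apply_apply _
  have keysum : ∀ (t : rels → A) (r : rels),
      ∑ i, dv r i • (∑ r', (B.symm (Pi.single i 1)) r' • t r') = t r := by
    intro t r
    have h1 : ∀ i, dv r i • (∑ r', (B.symm (Pi.single i 1)) r' • t r')
        = ∑ r', (dv r i * (B.symm (Pi.single i 1)) r') • t r' := by
      intro i
      rw [Finset.smul_sum]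
      exact Finset.sum_congr rfl fun r' _ => smul_smul _ _ _
    rw [Finset.sum_congr rfl fun i _ => h1 i, Finset.sum_comm]
    have h3 : ∑ i, dv r i • B.symm (Pi.single i (1:ℤ)) = (Pi.single r 1 : rels → ℤ) := by
      have h4 : ∑ i, dv r i • B.symm (Pi.single i (1:ℤ))
          = B.symm (∑ i, dv r i • (Pi.single i (1:ℤ) : Fin n → ℤ)) := by
        rw [map_sum]
        exact Finset.sum_congr rfl fun i _ => (map_smul _ _ _).symm
      rw [h4, pi_sum_single, hBsingle]
    have h2 : ∀ r', (∑ i, dv r i * (B.symm (Pi.single i 1)) r') = (Pi.single r 1 : rels → ℤ) r' := by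
      intro r'
      have := congrFun h3 r'
      rw [Finset.sum_apply] at this
      simpa [smul_eq_mul] using this
    calc ∑ r', ∑ i, (dv r i * (B.symm (Pi.single i 1)) r') • t r'
        = ∑ r', (∑ i, dv r i * (B.symm (Pi.single i 1)) r') • t r' := by
          exact Finset.sum_congr rfl fun r' _ => (Finset.sum_smul).symm
      _ = ∑ r', ((Pi.single r 1 : rels → ℤ) r') • t r' := by
          exact Finset.sum_congr rfl fun r' _ => by rw [h2 r']
      _ = t r := by
          rw [Finset.sum_eq_single r]
          · simp
          · intro b _ hb
            simp [Pi.single_apply, hb]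
          · simp
  -- the central extension and the base lift
  let gg : Fin n → G := fun i => π (FreeGroup.of i)
  let φ : F →* BarCocycle.Ext γ := FreeGroup.lift fun i => ⟨gg i, 0⟩
  have hpφ : ∀ w, (φ w).g = π w := by
    intro w
    have hh : (γ.proj).comp φ = π := by
      apply FreeGroup.ext_hom
      intro i
      show γ.proj (φ (FreeGroup.of i)) = π (FreeGroup.of i)
      rw [show φ (FreeGroup.of i) = ⟨gg i, 0⟩ from FreeGroup.lift_apply_of]
      rfl
    exact DFunLike.congr_fun hh w
  have hπrel : ∀ r ∈ rels, π r = 1 := by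
    intro r hr
    show e.symm (PresentedGroup.mk _ r) = 1
    have h1 : PresentedGroup.mk (rels : Set F) r = 1 :=
      (QuotientGroup.eq_one_iff r).mpr (Subgroup.subset_normalClosure hr)
    rw [h1, map_one]
  let t : rels → A := fun r => -γ.c 1 1 - (φ r.1).a
  let v : Fin n → A := fun i => ∑ r, (B.symm (Pi.single i 1)) r • t r
  let χ : F →* Multiplicative A := FreeGroup.lift fun i => Multiplicative.ofAdd (v i)
  have hχ : ∀ w : F, (χ w).toAdd = ∑ i, ((d w).toAdd i) • v i := by
    intro w
    let Lv : (Fin n → ℤ) →+ A :=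
      { toFun := fun u => ∑ i, u i • v i
        map_zero' := by simp
        map_add' := fun x y => by
          simp only [Pi.add_apply, add_smul, Finset.sum_add_distrib] }
    have hh : χ = (AddMonoidHom.toMultiplicative Lv).comp d := by
      apply FreeGroup.ext_hom
      intro i
      rw [show χ (FreeGroup.of i) = Multiplicative.ofAdd (v i) from FreeGroup.lift_apply_of,
        MonoidHom.comp_apply,
        show d (FreeGroup.of i) = Multiplicative.ofAdd (Pi.single i 1) from FreeGroup.lift_apply_of]
      show Multiplicative.ofAdd (v i) = Multiplicative.ofAdd (Lv (Pi.single i 1))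
      congr 1
      show v i = ∑ j, (Pi.single i (1:ℤ) : Fin n → ℤ) j • v j
      rw [Finset.sum_eq_single i]
      · simp
      · intro b _ hb
        simp [Pi.single_apply, hb]
      · simp
    rw [hh]
    rfl
  -- the adjusted lift
  let ψ : F →* BarCocycle.Ext γ :=
    { toFun := fun w => φ w * γ.cen (χ w)
      map_one' := by
        show φ 1 * γ.cen (χ 1) = 1
        rw [map_one, map_one, map_one, one_mul]
      map_mul' := fun a b => by
        show φ (a * b) * γ.cen (χ (a * b)) = (φ a * γ.cen (χ a)) * (φ b * γ.cen (χ b))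
        have hc := γ.cen_comm (χ a) (φ b)
        rw [map_mul, map_mul, map_mul, mul_assoc, mul_assoc]
        congr 1
        rw [← mul_assoc, ← hc, mul_assoc] }
  have hψof : ∀ i, ψ (FreeGroup.of i) = (⟨gg i, v i⟩ : BarCocycle.Ext γ) := by
    intro i
    show φ (FreeGroup.of i) * γ.cen (χ (FreeGroup.of i)) = (⟨gg i, v i⟩ : BarCocycle.Ext γ)
    rw [show φ (FreeGroup.of i) = ⟨gg i, 0⟩ from FreeGroup.lift_apply_of,
      show χ (FreeGroup.of i) = Multiplicative.ofAdd (v i) from FreeGroup.lift_apply_of]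
    refine BarCocycle.Ext.ext (mul_one _) ?_
    show 0 + ((Multiplicative.ofAdd (v i)).toAdd - γ.c 1 1) + γ.c (gg i) 1 = v i
    rw [γ.c_one_right (gg i)]
    show 0 + (v i - γ.c 1 1) + γ.c 1 1 = v i
    abel
  have hlift_eq : FreeGroup.lift (fun i => (⟨gg i, v i⟩ : BarCocycle.Ext γ)) = ψ := by
    apply FreeGroup.ext_hom
    intro i
    rw [hψof i]
    exact FreeGroup.lift_apply_of
  have hrels2 : ∀ r ∈ (rels : Set F),
      FreeGroup.lift (fun i => (⟨gg i, v i⟩ : BarCocycle.Ext γ)) r = 1 := by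
    intro r hr
    rw [hlift_eq]
    show φ r * γ.cen (χ r) = 1
    have hφr : φ r = ⟨1, (φ r).a⟩ := BarCocycle.Ext.ext (by rw [hpφ r, hπrel r hr]) rfl
    have hχr : (χ r).toAdd = t ⟨r, hr⟩ := by
      rw [hχ r]
      exact keysum t ⟨r, hr⟩
    rw [hφr]
    refine BarCocycle.Ext.ext (by simp) ?_
    show (φ r).a + ((χ r).toAdd - γ.c 1 1) + γ.c 1 1 = -γ.c 1 1
    rw [hχr]
    show (φ r).a + ((-γ.c 1 1 - (φ r).a) - γ.c 1 1) + γ.c 1 1 = -γ.c 1 1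
    abel
  let σP := PresentedGroup.toGroup hrels2
  let σ : G →* BarCocycle.Ext γ := σP.comp e.toMonoidHom
  have hproj : ∀ w : F, (FreeGroup.lift (fun i => (⟨gg i, v i⟩ : BarCocycle.Ext γ)) w).g = π w := by
    intro w
    rw [hlift_eq]
    show γ.proj (ψ w) = π w
    have hh : γ.proj.comp ψ = π := by
      apply FreeGroup.ext_hom
      intro i
      show γ.proj (ψ (FreeGroup.of i)) = π (FreeGroup.of i)
      rw [hψof i]
      rfl
    exact DFunLike.congr_fun hh w
  have hσg : ∀ g : G, (σ g).g = g := by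
    intro g
    obtain ⟨w, hw⟩ := PresentedGroup.mk_surjective (rels : Set F) (e g)
    have h1 : σ g = FreeGroup.lift (fun i => (⟨gg i, v i⟩ : BarCocycle.Ext γ)) w := by
      show σP (e g) = _
      rw [← hw]
      rfl
    rw [h1, hproj w]
    show e.symm (PresentedGroup.mk _ w) = g
    rw [hw, MulEquiv.symm_apply_apply]
  refine ⟨fun g => -(σ g).a, ?_⟩
  intro g h
  have heq := congrArg BarCocycle.Ext.a (map_mul σ g h)
  have heq2 : (σ (g * h)).a = (σ g).a + (σ h).a + γ.c g h := by
    rw [heq]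
    show (σ g).a + (σ h).a + γ.c (σ g).g (σ h).g = _
    rw [hσg g, hσg h]
  show γ.c g h = -(σ h).a - -(σ (g * h)).a + -(σ g).a
  rw [heq2]
  abel




/-- Degree-2 differential of the inhomogeneous bar complex of `G` with trivial
coefficients `ℤ`:  `∂[g|h] = [h] - [gh] + [g]`. -/
noncomputable def barD2 (G : Type*) [Group G] : ((G × G) →₀ ℤ) →ₗ[ℤ] (G →₀ ℤ) :=
  Finsupp.lift (G →₀ ℤ) ℤ (G × G) fun p =>
    Finsupp.single p.2 1 - Finsupp.single (p.1 * p.2) 1 + Finsupp.single p.1 1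

/-- Degree-3 differential of the inhomogeneous bar complex of `G` with trivial
coefficients `ℤ`:  `∂[g|h|k] = [h|k] - [gh|k] + [g|hk] - [g|h]`. -/
noncomputable def barD3 (G : Type*) [Group G] : ((G × G × G) →₀ ℤ) →ₗ[ℤ] ((G × G) →₀ ℤ) :=
  Finsupp.lift ((G × G) →₀ ℤ) ℤ (G × G × G) fun t =>
    Finsupp.single (t.2.1, t.2.2) 1 - Finsupp.single (t.1 * t.2.1, t.2.2) 1
      + Finsupp.single (t.1, t.2.1 * t.2.2) 1 - Finsupp.single (t.1, t.2.1) 1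

/-- The second integral group homology `H₂(G; ℤ)` (the Schur multiplier of `G`),
computed from the bar complex: cycles in degree 2 modulo boundaries from degree 3. -/
noncomputable abbrev schurMultiplier (G : Type*) [Group G] : Type _ :=
  LinearMap.ker (barD2 G) ⧸
    Submodule.comap (LinearMap.ker (barD2 G)).subtype (LinearMap.range (barD3 G))


lemma finsupp_lift_single {X : Type*} {M : Type*} [AddCommGroup M] (f : X → M) (a : X) :
    Finsupp.lift M ℤ X f (Finsupp.single a 1) = f a := by
  rw [Finsupp.lift_apply, Finsupp.sum_single_index (by simp), one_smul]


/-- A perfect group admitting a balanced presentation (with `n` generators and `n`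
relators) has vanishing second integral homology: `H₂(G; ℤ) = 0`; i.e. a perfect
group of deficiency zero is superperfect. -/
theorem perfect_balanced_presentation_superperfect (G : Type*) [Group G]
    (hperf : commutator G = ⊤)
    (n : ℕ) (rels : Finset (FreeGroup (Fin n))) (hcard : rels.card = n)
    (hpres : Nonempty (G ≃* PresentedGroup (rels : Set (FreeGroup (Fin n))))) :
    Subsingleton (schurMultiplier G) := by
  classical
  obtain ⟨e⟩ := hpres
  have main : ∀ m : (G × G) →₀ ℤ, barD2 G m = 0 → m ∈ LinearMap.range (barD3 G) := by
    intro m hm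
    by_contra hmr
    have hm0 : (Submodule.Quotient.mk m : ((G × G) →₀ ℤ) ⧸ LinearMap.range (barD3 G)) ≠ 0 :=
      fun h => hmr ((Submodule.Quotient.mk_eq_zero _).mp h)
    obtain ⟨χ, hχ⟩ := CharacterModule.exists_character_apply_ne_zero_of_ne_zero hm0
    set A := AddCircle (1 : ℚ) with hA
    let χ' : ((G × G) →₀ ℤ) →+ A :=
      AddMonoidHom.mk' (fun x => χ (Submodule.Quotient.mk x)) (by
        intro a b
        rw [← map_add χ]
        rfl)
    have hvanish : ∀ y : (G × G × G) →₀ ℤ, χ' (barD3 G y) = 0 := by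
      intro y
      show χ (Submodule.Quotient.mk (barD3 G y)) = 0
      rw [(Submodule.Quotient.mk_eq_zero (LinearMap.range (barD3 G))).mpr (LinearMap.mem_range.mpr ⟨y, rfl⟩), map_zero]
    have hsingle3 : ∀ g h k : G, barD3 G (Finsupp.single (g, h, k) 1)
        = Finsupp.single (h, k) 1 - Finsupp.single (g * h, k) 1
          + Finsupp.single (g, h * k) 1 - Finsupp.single (g, h) 1 :=
      fun g h k => finsupp_lift_single _ _
    have hsingle2 : ∀ g h : G, barD2 G (Finsupp.single (g, h) 1)
        = Finsupp.single h 1 - Finsupp.single (g * h) 1 + Finsupp.single g 1 :=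
      fun g h => finsupp_lift_single _ _
    let γ : BarCocycle G A :=
      { c := fun g h => χ' (Finsupp.single (g, h) 1)
        hc := by
          intro g h k
          have h3 := hvanish (Finsupp.single (g, h, k) 1)
          rw [hsingle3 g h k, map_sub, map_add, map_sub] at h3
          apply eq_of_sub_eq_zero
          have h4 : -(χ' (Finsupp.single (h, k) 1) - χ' (Finsupp.single (g * h, k) 1)
              + χ' (Finsupp.single (g, h * k) 1) - χ' (Finsupp.single (g, h) 1)) = -0 :=
            congrArg Neg.neg h3
          rw [neg_zero] at h4
          rw [← h4]
          abel }
    obtain ⟨f, hf⟩ := γ.exists_coboundary hperf n rels hcard e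
    let fl : (G →₀ ℤ) →+ A := Finsupp.liftAddHom fun g => zmultiplesHom A (f g)
    have hfl : ∀ g : G, fl (Finsupp.single g 1) = f g := by
      intro g
      rw [Finsupp.liftAddHom_apply_single]
      exact one_smul ℤ (f g)
    have hfact : χ' = fl.comp (barD2 G).toAddMonoidHom := by
      apply Finsupp.addHom_ext'
      intro p
      apply AddMonoidHom.ext_int
      show χ' (Finsupp.single p 1) = fl (barD2 G (Finsupp.single p 1))
      obtain ⟨g, h⟩ := p
      rw [hsingle2 g h, map_add, map_sub, hfl, hfl, hfl]
      exact hf g h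
    have hzero : χ' m = 0 := by
      rw [hfact]
      show fl (barD2 G m) = 0
      rw [hm, map_zero]
    exact hχ hzero
  refine subsingleton_of_forall_eq 0 fun x => ?_
  obtain ⟨z, rfl⟩ := Submodule.Quotient.mk_surjective _ x
  rw [Submodule.Quotient.mk_eq_zero]
  exact main z.1 (LinearMap.mem_ker.mp z.2)
end
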